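/- arXiv:2311.18106 — 5 statements merged into one kernel-verified Lean document; each statement's English description precedes it below -/
import Mathlib

section
/- Let N, m₁ be positive integers with m₁ dividing N, and let p₀, p₁ ∈ ℝ. Let P = (1−p₁)·I_N + (p₁−p₀)·(I_{N/m₁} ⊗ J_{m₁}) + p₀·J_N, where J_d is the d×d all-ones matrix and I_{N/m₁} ⊗ J_{m₁} is the block-diagonal matrix with N/m₁ diagonal blocks equal to J_{m₁}. Then the characteristic polynomial of P equals (X − (1−p₁))^{N − N/m₁} · (X − ((1−p₁) + m₁(p₁−p₀)))^{N/m₁ − 1} · (X − ((1−p₁) + m₁(p₁−p₀) + N·p₀)). Equivalently, P has eigenvalue 1−p₁ with multiplicity N − N/m₁, eigenvalue (1−p₁) + m₁(p₁−p₀) with multiplicity N/m₁ − 1, and eigenvalue (1−p₁) + m₁(p₁−p₀) + N·p₀ with multiplicity 1. -/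
open Polynomial

open Matrix Kronecker

namespace OneRSBaux

noncomputable def W (d : ℕ) : Matrix (Fin d) (Fin d) ℝ :=
  Matrix.of fun i j => if (i : ℕ) = 0 then 1
    else (if j = i then (1:ℝ) else 0) - (if (j : ℕ) = 0 then 1 else 0)

noncomputable def V (d : ℕ) : Matrix (Fin d) (Fin d) ℝ :=
  Matrix.of fun j l => if (l : ℕ) = 0 then 1/(d:ℝ) else (if l = j then (1:ℝ) else 0) - 1/(d:ℝ)

lemma W_rowsum (d : ℕ) [NeZero d] (i : Fin d) :
    ∑ j, W d i j = if (i : ℕ) = 0 then (d : ℝ) else 0 := by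
  by_cases h : (i : ℕ) = 0
  · simp [W, h, Finset.card_univ, Fin.val_eq_zero_iff.mp h]
  · simp only [W, Matrix.of_apply, h, if_false, Finset.sum_sub_distrib]
    rw [Finset.sum_ite_eq' _ i (fun _ => (1:ℝ))]
    have : ∀ j : Fin d, ((j : ℕ) = 0) = (j = 0) := fun j => by
      exact propext Fin.val_eq_zero_iff
    simp only [this]
    rw [Finset.sum_ite_eq' _ (0 : Fin d) (fun _ => (1:ℝ))]
    simp

lemma VW (d : ℕ) [NeZero d] : V d * W d = 1 := by
  obtain ⟨n, rfl⟩ : ∃ n, d = n + 1 := ⟨d - 1, (Nat.succ_pred_eq_of_pos (Nat.pos_of_ne_zero (NeZero.ne d))).symm⟩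
  ext j i
  rw [Matrix.mul_apply, Fin.sum_univ_succ]
  have hd : ((n : ℝ) + 1) ≠ 0 := by positivity
  simp only [V, W, Matrix.of_apply, Fin.val_zero, Fin.val_succ, Nat.succ_ne_zero, if_true,
    if_false, Nat.add_eq_zero, and_false, one_ne_zero]
  have L : ∀ (c : ℝ) (i' : Fin n), ∑ x : Fin n, (c * if x = i' then (1:ℝ) else 0) = c := by
    intro c i'
    simp [mul_ite, Finset.sum_ite_eq']
  induction j using Fin.cases with
  | zero =>
    induction i using Fin.cases with
    | zero =>
      simp only [Fin.succ_ne_zero, if_false, Fin.val_zero, if_true, Matrix.one_apply_eq,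
        zero_sub, mul_one]
      simp only [show ∀ x : Fin n, ((0:Fin (n+1)) = x.succ) = False by
        simp [eq_comm, Fin.succ_ne_zero], if_false, zero_sub, neg_mul, neg_neg, mul_one,
        Finset.sum_const, Finset.card_univ, Fintype.card_fin, nsmul_eq_mul]
      push_cast; field_simp; ring
    | succ i =>
      simp only [Fin.succ_ne_zero, if_false, Fin.val_succ, Nat.add_eq_zero, and_false,
        one_ne_zero, if_false, sub_zero, zero_sub, neg_mul,
        show ∀ x : Fin n, (Fin.succ i = Fin.succ x) = (x = i) by
          simp [Fin.succ_inj, eq_comm]]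
      rw [Finset.sum_neg_distrib, L]
      simp [Matrix.one_apply, (Fin.succ_ne_zero i).symm]
  | succ j =>
    induction i using Fin.cases with
    | zero =>
      simp only [Fin.val_zero, if_true, Matrix.one_apply,
        show ∀ x : Fin n, ((0:Fin (n+1)) = x.succ) = False by
          simp [eq_comm, Fin.succ_ne_zero],
        show ∀ x : Fin n, (x.succ = Fin.succ j) = (x = j) by simp [Fin.succ_inj],
        if_false, zero_sub, sub_mul, mul_one, one_mul, ite_mul, neg_mul,
        Fin.succ_ne_zero, Ne.symm (Fin.succ_ne_zero j)]
      rw [Finset.sum_sub_distrib]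
      simp only [Finset.sum_neg_distrib, Finset.sum_ite_eq' Finset.univ j (fun _ => (1:ℝ)),
        Finset.mem_univ, if_true, Finset.sum_const, Finset.card_univ, Fintype.card_fin,
        nsmul_eq_mul]
      push_cast; field_simp
      simp only [neg_zero, Finset.sum_ite_eq', Finset.mem_univ, if_true]; ring
    | succ i =>
      simp only [Fin.val_succ, Nat.add_eq_zero, and_false, one_ne_zero, if_false, sub_zero,
        show ∀ x : Fin n, (x.succ = Fin.succ j) = (x = j) by simp [Fin.succ_inj],
        show ∀ x : Fin n, (Fin.succ i = Fin.succ x) = (x = i) by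
          simp [Fin.succ_inj, eq_comm], sub_mul, ite_mul, one_mul, zero_mul]
      rw [Finset.sum_sub_distrib]
      rw [Finset.sum_ite_eq' Finset.univ j (fun x => if x = i then (1:ℝ) else 0), L]
      simp only [Finset.mem_univ, if_true]
      have : (1 : Matrix (Fin (n+1)) (Fin (n+1)) ℝ) j.succ i.succ = if j = i then 1 else 0 := by
        simp [Matrix.one_apply, Fin.succ_inj]
      rw [this]
      split <;> ring
lemma sum1 {α β : Type*} [Fintype α] [Fintype β] [DecidableEq α] [DecidableEq β]
    (f : α → ℝ) (g : β → ℝ) (a : α) (b : β) (A : ℝ) :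
    ∑ c, ∑ s, f c * g s * (if c = a ∧ s = b then A else 0) = f a * g b * A := by
  have h : ∀ (c : α) (s : β), f c * g s * (if c = a ∧ s = b then A else 0) =
      if s = b then (if c = a then f c * g s * A else 0) else 0 := by
    intro c s; by_cases h1 : c = a <;> by_cases h2 : s = b <;> simp [h1, h2]
  simp_rw [h, Finset.sum_ite_eq' Finset.univ b, Finset.mem_univ, if_true,
    Finset.sum_ite_eq' Finset.univ a]
  simp

lemma sum2 {α β : Type*} [Fintype α] [Fintype β] [DecidableEq α] [DecidableEq β]
    (f : α → ℝ) (g : β → ℝ) (a : α) (B : ℝ) :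
    ∑ c, ∑ s, f c * g s * (if c = a then B else 0) = f a * (∑ s, g s) * B := by
  have h : ∀ (c : α) (s : β), f c * g s * (if c = a then B else 0) =
      if c = a then f c * g s * B else 0 := by
    intro c s; by_cases h1 : c = a <;> simp [h1]
  simp_rw [h]
  have h2 : ∀ c : α, (∑ s, if c = a then f c * g s * B else 0) =
      if c = a then f c * (∑ s, g s) * B else 0 := by
    intro c; by_cases h1 : c = a
    · simp only [h1, if_true, Finset.mul_sum, Finset.sum_mul]
    · simp [h1]
  simp_rw [h2]
  rw [Finset.sum_ite_eq' Finset.univ a]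
  simp

lemma sum3 {α β : Type*} [Fintype α] [Fintype β]
    (f : α → ℝ) (g : β → ℝ) (B : ℝ) :
    ∑ c, ∑ s, f c * g s * B = (∑ c, f c) * (∑ s, g s) * B := by
  rw [Finset.sum_mul, Finset.sum_mul]
  refine Finset.sum_congr rfl fun c _ => ?_
  rw [Finset.mul_sum, Finset.sum_mul]

lemma key (k m : ℕ) [NeZero k] [NeZero m] (p₀ p₁ : ℝ)
    (Q : Matrix (Fin k × Fin m) (Fin k × Fin m) ℝ)
    (hQ : ∀ a b : Fin k × Fin m, Q a b = (if a = b then 1 - p₁ else 0) +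
      (if a.1 = b.1 then p₁ - p₀ else 0) + p₀) :
    (W k ⊗ₖ W m) * Q =
      (Matrix.diagonal fun a : Fin k × Fin m =>
        if (a.2 : ℕ) ≠ 0 then 1 - p₁
        else if (a.1 : ℕ) ≠ 0 then (1 - p₁) + (m : ℝ) * (p₁ - p₀)
        else (1 - p₁) + (m : ℝ) * (p₁ - p₀) + ((k * m : ℕ) : ℝ) * p₀) * (W k ⊗ₖ W m) := by
  ext ⟨b, r⟩ ⟨b', r'⟩
  rw [Matrix.mul_apply, Matrix.diagonal_mul]
  rw [Fintype.sum_prod_type]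
  simp only [kroneckerMap_apply, hQ, Prod.mk.injEq]
  simp only [mul_add, Finset.sum_add_distrib]
  rw [sum1 (W k b) (W m r) b' r', sum2 (W k b) (W m r) b', sum3 (W k b) (W m r) p₀,
    W_rowsum, W_rowsum]
  by_cases hr : (r : ℕ) = 0 <;> by_cases hb : (b : ℕ) = 0 <;>
    simp only [hr, hb, if_true, if_false, ne_eq, not_true, not_false_iff] <;>
    [skip; skip; skip; skip]
  · have h1 : W m r r' = 1 := by simp [W, hr, Fin.val_eq_zero_iff.mp hr]
    have h2 : W k b b' = 1 := by simp [W, hb, Fin.val_eq_zero_iff.mp hb]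
    rw [h1, h2]; push_cast; ring
  · have h1 : W m r r' = 1 := by simp [W, hr, Fin.val_eq_zero_iff.mp hr]
    rw [h1]; ring
  · simp; ring
  · simp; ring

lemma charpoly_diagonal {n : Type*} [Fintype n] [DecidableEq n] (v : n → ℝ) :
    (Matrix.diagonal v).charpoly = ∏ i, (X - C (v i)) := by
  have h : charmatrix (Matrix.diagonal v) =
      Matrix.diagonal (fun i => (X : ℝ[X]) - C (v i)) := by
    apply Matrix.ext
    intro i j
    by_cases hij : i = j
    · subst hij; rw [charmatrix_apply_eq, Matrix.diagonal_apply_eq, Matrix.diagonal_apply_eq]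
    · rw [charmatrix_apply_ne _ _ _ hij, Matrix.diagonal_apply_ne _ hij,
        Matrix.diagonal_apply_ne _ hij]
      simp
  rw [Matrix.charpoly, h, Matrix.det_diagonal]

lemma charpoly_eq_of_conj {n : Type*} [Fintype n] [DecidableEq n]
    (U Q D : Matrix n n ℝ) (hdet : U.det ≠ 0) (h : U * Q = D * U) :
    Q.charpoly = D.charpoly := by
  have h' : U.map C * charmatrix Q = charmatrix D * U.map C := by
    unfold charmatrix
    rw [Matrix.mul_sub, Matrix.sub_mul]
    congr 1
    · exact (Matrix.scalar_commute (X : ℝ[X]) (fun r => Commute.all _ _) (U.map C)).symm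
    · rw [RingHom.mapMatrix_apply, RingHom.mapMatrix_apply, ← Matrix.map_mul, h, Matrix.map_mul]
  have hdet' : (U.map (C : ℝ →+* ℝ[X])).det ≠ 0 := by
    rw [← RingHom.mapMatrix_apply, ← RingHom.map_det]
    simpa using hdet
  have := congrArg Matrix.det h'
  rw [Matrix.det_mul, Matrix.det_mul] at this
  rw [Matrix.charpoly, Matrix.charpoly]
  apply mul_left_cancel₀ hdet'
  rw [this, mul_comm]

end OneRSBaux

open OneRSBaux

/-- **Spectrum of the 1-rsb Parisi overlap matrix.**
For `m₁ ∣ N`, the matrix `P = (1 − p₁)·I_N + (p₁ − p₀)·(I_{N/m₁} ⊗ J_{m₁}) + p₀·J_N`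
(written entrywise: the `(i,j)` entry is `[i = j]·(1 − p₁) + [⌊i/m₁⌋ = ⌊j/m₁⌋]·(p₁ − p₀) + p₀`)
has characteristic polynomial
`(X − (1 − p₁))^(N − N/m₁) · (X − ((1 − p₁) + m₁(p₁ − p₀)))^(N/m₁ − 1)
  · (X − ((1 − p₁) + m₁(p₁ − p₀) + N·p₀))`,
i.e. eigenvalue `1 − p₁` with multiplicity `N − N/m₁`, eigenvalue
`(1 − p₁) + m₁(p₁ − p₀)` with multiplicity `N/m₁ − 1`, and eigenvalue
`(1 − p₁) + m₁(p₁ − p₀) + N·p₀` with multiplicity `1`. -/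
theorem oneRSB_parisi_spectrum (N m₁ : ℕ) (hN : 0 < N) (hm₁ : 0 < m₁) (hdvd : m₁ ∣ N)
    (p₀ p₁ : ℝ) (P : Matrix (Fin N) (Fin N) ℝ)
    (hP : ∀ i j : Fin N,
      P i j = (if i = j then 1 - p₁ else 0) +
        (if (i : ℕ) / m₁ = (j : ℕ) / m₁ then p₁ - p₀ else 0) + p₀) :
    P.charpoly =
      (X - C (1 - p₁)) ^ (N - N / m₁) *
        (X - C ((1 - p₁) + (m₁ : ℝ) * (p₁ - p₀))) ^ (N / m₁ - 1) *
        (X - C ((1 - p₁) + (m₁ : ℝ) * (p₁ - p₀) + (N : ℝ) * p₀)) := by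
  classical
  set k := N / m₁ with hk
  have hkm : k * m₁ = N := Nat.div_mul_cancel hdvd
  haveI : NeZero m₁ := ⟨hm₁.ne'⟩
  have hkpos : 0 < k := Nat.div_pos (Nat.le_of_dvd hN hdvd) hm₁
  haveI : NeZero k := ⟨hkpos.ne'⟩
  let e : Fin k × Fin m₁ ≃ Fin N := finProdFinEquiv.trans (finCongr hkm)
  have he : ∀ a : Fin k × Fin m₁, ((e a : ℕ)) = (a.2 : ℕ) + m₁ * (a.1 : ℕ) := fun a => rfl
  have hdiv : ∀ a : Fin k × Fin m₁, ((e a : ℕ)) / m₁ = (a.1 : ℕ) := by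
    intro a
    rw [he, Nat.add_mul_div_left _ _ hm₁, Nat.div_eq_of_lt a.2.isLt, Nat.zero_add]
  set Q : Matrix (Fin k × Fin m₁) (Fin k × Fin m₁) ℝ := P.submatrix e e with hQdef
  have hQ : ∀ a b : Fin k × Fin m₁, Q a b = (if a = b then 1 - p₁ else 0) +
      (if a.1 = b.1 then p₁ - p₀ else 0) + p₀ := by
    intro a b
    rw [hQdef, Matrix.submatrix_apply, hP]
    have h1 : (e a = e b) = (a = b) := by simp [e.apply_eq_iff_eq]
    have h2 : ((e a : ℕ) / m₁ = (e b : ℕ) / m₁) = (a.1 = b.1) := by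
      rw [hdiv, hdiv]; simp [Fin.val_eq_val]
    simp only [h1, h2]
  have hPQ : P.charpoly = Q.charpoly := by
    have := Matrix.charpoly_reindex (R := ℝ) e.symm P
    rw [← this]
    congr 1
  set dfun : Fin k × Fin m₁ → ℝ := fun a =>
    if (a.2 : ℕ) ≠ 0 then 1 - p₁
    else if (a.1 : ℕ) ≠ 0 then (1 - p₁) + (m₁ : ℝ) * (p₁ - p₀)
    else (1 - p₁) + (m₁ : ℝ) * (p₁ - p₀) + ((k * m₁ : ℕ) : ℝ) * p₀ with hdfun
  have hconj : (W k ⊗ₖ W m₁) * Q = (Matrix.diagonal dfun) * (W k ⊗ₖ W m₁) :=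
    key k m₁ p₀ p₁ Q hQ
  have hinv : (V k ⊗ₖ V m₁) * (W k ⊗ₖ W m₁) = 1 := by
    rw [← Matrix.mul_kronecker_mul, VW, VW, Matrix.one_kronecker_one]
  have hdet : (W k ⊗ₖ W m₁).det ≠ 0 := by
    have := congrArg Matrix.det hinv
    rw [Matrix.det_mul, Matrix.det_one] at this
    exact right_ne_zero_of_mul_eq_one this
  have hQD : Q.charpoly = (Matrix.diagonal dfun).charpoly :=
    charpoly_eq_of_conj _ _ _ hdet hconj
  rw [hPQ, hQD, OneRSBaux.charpoly_diagonal]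
  -- now compute the product
  obtain ⟨m, rfl⟩ : ∃ m, m₁ = m + 1 := ⟨m₁ - 1, (Nat.succ_pred_eq_of_pos hm₁).symm⟩
  obtain ⟨k', hk'⟩ : ∃ k', k = k' + 1 := ⟨k - 1, (Nat.succ_pred_eq_of_pos hkpos).symm⟩
  have hXC : ∀ a : Fin k × Fin (m + 1), (X : ℝ[X]) - C (dfun a) =
      if (a.2 : ℕ) ≠ 0 then X - C (1 - p₁)
      else if (a.1 : ℕ) ≠ 0 then X - C ((1 - p₁) + ((m+1 : ℕ) : ℝ) * (p₁ - p₀))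
      else X - C ((1 - p₁) + ((m+1 : ℕ) : ℝ) * (p₁ - p₀) + ((k * (m+1) : ℕ) : ℝ) * p₀) := by
    intro a
    rw [hdfun]
    by_cases h2 : (a.2 : ℕ) ≠ 0 <;> by_cases h1 : (a.1 : ℕ) ≠ 0 <;> simp [h1, h2]
  rw [Fintype.prod_prod_type]
  simp only [hXC]
  set GA : ℝ[X] := X - C (1 - p₁) with hGA
  set GB : ℝ[X] := X - C ((1 - p₁) + ((m+1 : ℕ) : ℝ) * (p₁ - p₀)) with hGB
  set GC : ℝ[X] := X - C ((1 - p₁) + ((m+1 : ℕ) : ℝ) * (p₁ - p₀) + ((k * (m+1) : ℕ) : ℝ) * p₀)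
    with hGC
  have hinner : ∀ b : Fin k, (∏ r : Fin (m + 1),
      if (r : ℕ) ≠ 0 then GA else if (b : ℕ) ≠ 0 then GB else GC) =
      (if (b : ℕ) ≠ 0 then GB else GC) * GA ^ m := by
    intro b
    rw [Fin.prod_univ_succ]
    simp [Finset.prod_const]
  simp only [hinner]
  rw [Finset.prod_mul_distrib, Finset.prod_const, Finset.card_univ, Fintype.card_fin]
  have hGCN : GC = X - C ((1 - p₁) + ((m+1 : ℕ) : ℝ) * (p₁ - p₀) + (N : ℝ) * p₀) := by
    rw [hGC, hkm]
  have hout : (∏ x : Fin k, if (x : ℕ) ≠ 0 then GB else GC) = GC * GB ^ (k - 1) := by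
    rw [hk', Fin.prod_univ_succ]
    simp [Finset.prod_const]
  rw [hout, hGCN]
  have hpow : (GA ^ m) ^ k = GA ^ (N - k) := by
    rw [← pow_mul]
    congr 1
    rw [← hkm, Nat.mul_succ, Nat.add_sub_cancel, Nat.mul_comm]
  rw [hpow]
  ring
end

section
/- Let N, m₁, m₂ be positive integers with m₂ dividing m₁ and m₁ dividing N, and let p₀, p₁, p₂ ∈ ℝ. Let P = (1−p₂)·I_N + (p₂−p₁)·(I_{N/m₂} ⊗ J_{m₂}) + (p₁−p₀)·(I_{N/m₁} ⊗ J_{m₁}) + p₀·J_N. Then P has eigenvalue 1−p₂ with multiplicity N − N/m₂, eigenvalue (1−p₂) + m₂(p₂−p₁) with multiplicity N/m₂ − N/m₁, eigenvalue (1−p₂) + m₂(p₂−p₁) + m₁(p₁−p₀) with multiplicity N/m₁ − 1, and eigenvalue (1−p₂) + m₂(p₂−p₁) + m₁(p₁−p₀) + N·p₀ with multiplicity 1. -/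
open Polynomial

namespace TwoRSB

open Matrix Kronecker

variable (m : ℕ)

/-- all ones matrix -/
def Jm : Matrix (Fin m) (Fin m) ℝ := Matrix.of fun _ _ => 1

/-- eigenbasis matrix: column 0 is all ones, column j is e_j - e_0 -/
def Vm [NeZero m] : Matrix (Fin m) (Fin m) ℝ :=
  Matrix.of fun x j => (if x = j then 1 else 0) + (if j = 0 then 1 else 0) - (if x = 0 then 1 else 0)

/-- diagonal eigenvalue matrix for Jm -/
def Dm [NeZero m] : Matrix (Fin m) (Fin m) ℝ :=
  Matrix.diagonal (fun j => if j = 0 then (m : ℝ) else 0)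

variable [NeZero m]

lemma J_mul_V : Jm m * Vm m = Vm m * Dm m := by
  ext x j
  rw [Dm, Matrix.mul_diagonal, Matrix.mul_apply]
  simp only [Jm, Vm, Matrix.of_apply, one_mul]
  rw [Finset.sum_sub_distrib, Finset.sum_add_distrib]
  simp [Finset.sum_ite_eq, mul_comm]
  split_ifs <;> simp_all

/-- row-reduction matrix -/
def Lm [NeZero m] : Matrix (Fin m) (Fin m) ℝ :=
  Matrix.of fun x y => (if x = y then 1 else 0) + (if x = 0 then 1 else 0)
    - (if x = 0 ∧ y = 0 then 1 else 0)

def Mm [NeZero m] : Matrix (Fin m) (Fin m) ℝ :=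
  Matrix.of fun x j => if x = 0 then (if j = 0 then (m : ℝ) else 0)
    else (if x = j then 1 else 0) + (if j = 0 then 1 else 0)

lemma L_mul_V : Lm m * Vm m = Mm m := by
  ext x j
  rw [Matrix.mul_apply]
  rcases eq_or_ne x 0 with hx | hx
  · subst hx
    have : ∀ y : Fin m, Lm m 0 y * Vm m y j = Vm m y j := by
      intro y
      simp only [Lm, Matrix.of_apply]
      rcases eq_or_ne y 0 with hy | hy <;> simp [hy, eq_comm]
    simp only [this]
    simp only [Vm, Matrix.of_apply, Mm]
    rw [Finset.sum_sub_distrib, Finset.sum_add_distrib]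
    simp [Finset.sum_ite_eq]
    try split_ifs <;> simp_all
  · have : ∀ y : Fin m, Lm m x y * Vm m y j = if x = y then Vm m y j else 0 := by
      intro y
      simp only [Lm, Matrix.of_apply, hx]
      rcases eq_or_ne x y with hy | hy <;> simp [hy] <;> simp [hx, Ne.symm]
    simp only [this]
    rw [Finset.sum_ite_eq]
    simp [Mm, hx, Vm]

lemma det_Vm : (Vm m).det = m := by
  have hL : (Lm m).det = 1 := by
    have ht : (Lm m).BlockTriangular id := by
      intro i j hij
      simp only [id] at hij
      have h1 : i ≠ j := ne_of_gt hij
      have h2 : i ≠ 0 := by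
        intro h; subst h; exact absurd hij (by exact not_lt_of_ge (Fin.zero_le j))
      simp [Lm, h1, h2]
    rw [Matrix.det_of_upperTriangular ht]
    apply Finset.prod_eq_one
    intro i _
    rcases eq_or_ne i 0 with h | h <;> simp [Lm, h]
  have hM : (Mm m).det = m := by
    have ht : (Mm m).BlockTriangular (OrderDual.toDual : Fin m → (Fin m)ᵒᵈ) := by
      intro i j hij
      have hij' : i < j := hij
      have h1 : i ≠ j := ne_of_lt hij'
      have h2 : j ≠ 0 := by
        intro h; subst h; exact absurd hij' (not_lt_of_ge (Fin.zero_le i))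
      rcases eq_or_ne i 0 with h | h <;> simp [Mm, h, h1, h2]
    rw [Matrix.det_of_lowerTriangular _ ht]
    rw [Finset.prod_eq_single 0]
    · simp [Mm]
    · intro i _ h; simp [Mm, h]
    · simp
  have := congrArg Matrix.det (L_mul_V m)
  rw [Matrix.det_mul, hL, hM, one_mul] at this
  exact this


lemma charpoly_of_similar {n : Type*} [Fintype n] [DecidableEq n]
    (A U D : Matrix n n ℝ) (h : A * U = U * D) (hdet : U.det ≠ 0) :
    A.charpoly = D.charpoly := by
  have key : A.charmatrix * U.map C = U.map C * D.charmatrix := by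
    have hA : A.charmatrix = Matrix.scalar n X - A.map C := rfl
    have hD : D.charmatrix = Matrix.scalar n X - D.map C := rfl
    rw [hA, hD, sub_mul, mul_sub, ← Matrix.map_mul, ← Matrix.map_mul, h]
    congr 1
    exact (Matrix.scalar_commute X (fun r' => Commute.all X r') (U.map C)).eq
  have hdet' := congrArg Matrix.det key
  rw [Matrix.det_mul, Matrix.det_mul] at hdet'
  have hU : (U.map C).det = C U.det := by
    rw [RingHom.map_det]; rfl
  rw [hU, mul_comm ((C U.det)) D.charmatrix.det] at hdet'
  have hC : (C U.det : ℝ[X]) ≠ 0 := by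
    simpa using hdet
  exact mul_right_cancel₀ hC hdet'

lemma charpoly_diagonal {n : Type*} [Fintype n] [DecidableEq n] (d : n → ℝ) :
    (Matrix.diagonal d).charpoly = ∏ i, (X - C (d i)) := by
  have : (Matrix.diagonal d).charmatrix = Matrix.diagonal (fun i => X - C (d i)) := by
    ext i j
    rcases eq_or_ne i j with h | h
    · subst h; rw [Matrix.charmatrix_apply_eq]; simp
    · rw [Matrix.charmatrix_apply_ne _ _ _ h]
      simp [Matrix.diagonal_apply_ne _ h]
  rw [Matrix.charpoly, this, Matrix.det_diagonal]

lemma prod_fin_of_ne {n : ℕ} [NeZero n] {M : Type*} [CommMonoid M] (f : Fin n → M) (g : M)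
    (h : ∀ j : Fin n, j ≠ 0 → f j = g) : ∏ j, f j = f 0 * g ^ (n - 1) := by
  rcases n with _ | n'
  · exact absurd rfl (NeZero.ne 0)
  rw [Fin.prod_univ_succ]
  congr 1
  rw [Finset.prod_congr rfl (fun j _ => h j.succ (Fin.succ_ne_zero j))]
  simp

end TwoRSB


open TwoRSB Matrix Kronecker

/-- **Spectrum of the 2-rsb Parisi overlap matrix.**
For `m₂ ∣ m₁ ∣ N`, the matrix
`P = (1 − p₂)·I_N + (p₂ − p₁)·(I_{N/m₂} ⊗ J_{m₂}) + (p₁ − p₀)·(I_{N/m₁} ⊗ J_{m₁}) + p₀·J_N`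
has eigenvalue `1 − p₂` with multiplicity `N − N/m₂`, eigenvalue
`(1 − p₂) + m₂(p₂ − p₁)` with multiplicity `N/m₂ − N/m₁`, eigenvalue
`(1 − p₂) + m₂(p₂ − p₁) + m₁(p₁ − p₀)` with multiplicity `N/m₁ − 1`, and eigenvalue
`(1 − p₂) + m₂(p₂ − p₁) + m₁(p₁ − p₀) + N·p₀` with multiplicity `1`;
equivalently its characteristic polynomial factors accordingly. -/
theorem twoRSB_parisi_spectrum (N m₁ m₂ : ℕ) (hN : 0 < N) (hm₁ : 0 < m₁) (hm₂ : 0 < m₂)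
    (hdvd₂ : m₂ ∣ m₁) (hdvd₁ : m₁ ∣ N) (p₀ p₁ p₂ : ℝ) (P : Matrix (Fin N) (Fin N) ℝ)
    (hP : ∀ i j : Fin N,
      P i j = (if i = j then 1 - p₂ else 0) +
        (if (i : ℕ) / m₂ = (j : ℕ) / m₂ then p₂ - p₁ else 0) +
        (if (i : ℕ) / m₁ = (j : ℕ) / m₁ then p₁ - p₀ else 0) + p₀) :
    P.charpoly =
      (X - C (1 - p₂)) ^ (N - N / m₂) *
        (X - C ((1 - p₂) + (m₂ : ℝ) * (p₂ - p₁))) ^ (N / m₂ - N / m₁) *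
        (X - C ((1 - p₂) + (m₂ : ℝ) * (p₂ - p₁) + (m₁ : ℝ) * (p₁ - p₀))) ^ (N / m₁ - 1) *
        (X - C ((1 - p₂) + (m₂ : ℝ) * (p₂ - p₁) + (m₁ : ℝ) * (p₁ - p₀) + (N : ℝ) * p₀)) := by
  classical
  obtain ⟨r, hr⟩ := hdvd₂
  obtain ⟨k, hk⟩ := hdvd₁
  have hr0 : 0 < r := by
    rcases Nat.eq_zero_or_pos r with h | h
    · rw [h, mul_zero] at hr; omega
    · exact h
  have hk0 : 0 < k := by
    rcases Nat.eq_zero_or_pos k with h | h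
    · rw [h, mul_zero] at hk; omega
    · exact h
  haveI : NeZero m₂ := ⟨hm₂.ne'⟩
  haveI : NeZero r := ⟨hr0.ne'⟩
  haveI : NeZero k := ⟨hk0.ne'⟩
  have hN' : k * (r * m₂) = N := by rw [hk, hr]; ring
  obtain ⟨e, heval⟩ : ∃ e : (Fin k × (Fin r × Fin m₂)) ≃ Fin N,
      ∀ x : Fin k × Fin r × Fin m₂,
        ((e x : Fin N) : ℕ) = (x.2.2 : ℕ) + m₂ * ((x.2.1 : ℕ) + r * (x.1 : ℕ)) := by
    refine ⟨((Equiv.prodCongr (Equiv.refl (Fin k)) finProdFinEquiv).trans finProdFinEquiv).trans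
      (finCongr hN'), ?_⟩
    rintro ⟨a, b, c⟩
    simp [finCongr, Fin.coe_cast, finProdFinEquiv_apply_val]
    ring
  have hdiv2 : ∀ x : Fin k × Fin r × Fin m₂,
      ((e x : Fin N) : ℕ) / m₂ = (x.2.1 : ℕ) + r * (x.1 : ℕ) := by
    intro x
    rw [heval, Nat.add_mul_div_left _ _ hm₂, Nat.div_eq_of_lt x.2.2.2, zero_add]
  have hdiv1 : ∀ x : Fin k × Fin r × Fin m₂, ((e x : Fin N) : ℕ) / m₁ = (x.1 : ℕ) := by
    intro x
    rw [hr, ← Nat.div_div_eq_div_mul, hdiv2, Nat.add_mul_div_left _ _ hr0,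
      Nat.div_eq_of_lt x.2.1.2, zero_add]
  have hinj : ∀ x y : Fin k × Fin r × Fin m₂,
      ((x.2.1 : ℕ) + r * (x.1 : ℕ) = (y.2.1 : ℕ) + r * (y.1 : ℕ)) ↔
        (x.2.1 = y.2.1 ∧ x.1 = y.1) := by
    intro x y
    constructor
    · intro h
      have hb := congrArg (· % r) h
      simp only [Nat.add_mul_mod_self_left, Nat.mod_eq_of_lt x.2.1.2,
        Nat.mod_eq_of_lt y.2.1.2] at hb
      refine ⟨Fin.ext hb, Fin.ext ?_⟩
      rw [hb] at h
      exact Nat.eq_of_mul_eq_mul_left hr0 (by omega)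
    · rintro ⟨h1, h2⟩; rw [h1, h2]
  set Q : Matrix (Fin k × Fin r × Fin m₂) (Fin k × Fin r × Fin m₂) ℝ :=
    (1 - p₂) • 1 +
      (p₂ - p₁) • ((1 : Matrix (Fin k) (Fin k) ℝ) ⊗ₖ ((1 : Matrix (Fin r) (Fin r) ℝ) ⊗ₖ Jm m₂)) +
      (p₁ - p₀) • ((1 : Matrix (Fin k) (Fin k) ℝ) ⊗ₖ (Jm r ⊗ₖ Jm m₂)) +
      p₀ • (Jm k ⊗ₖ (Jm r ⊗ₖ Jm m₂)) with hQ
  have hPQ : Matrix.reindex e.symm e.symm P = Q := by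
    ext x y
    rw [Matrix.reindex_apply, Matrix.submatrix_apply, Equiv.symm_symm, hP]
    have c1 : (e x = e y) ↔ x = y := e.injective.eq_iff
    have c2 : (((e x : Fin N) : ℕ) / m₂ = ((e y : Fin N) : ℕ) / m₂) ↔
        (x.2.1 = y.2.1 ∧ x.1 = y.1) := by rw [hdiv2, hdiv2, hinj]
    have c3 : (((e x : Fin N) : ℕ) / m₁ = ((e y : Fin N) : ℕ) / m₁) ↔ x.1 = y.1 := by
      rw [hdiv1, hdiv1, Fin.val_inj]
    rw [hQ]
    simp only [Matrix.add_apply, Matrix.smul_apply, Matrix.kroneckerMap_apply,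
      Matrix.one_apply, Jm, Matrix.of_apply, smul_eq_mul]
    rw [if_congr c1 rfl rfl, if_congr c2 rfl rfl, if_congr c3 rfl rfl]
    obtain ⟨a, b, c⟩ := x
    obtain ⟨a', b', c'⟩ := y
    simp only [Prod.mk.injEq]
    clear hQ c1 c2 c3 hP heval hdiv2 hdiv1 hinj hN'
    clear_value Q
    clear Q
    split_ifs <;> first | ring1 | tauto
  set U : Matrix (Fin k × Fin r × Fin m₂) (Fin k × Fin r × Fin m₂) ℝ :=
    Vm k ⊗ₖ (Vm r ⊗ₖ Vm m₂) with hU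
  set d : Fin k × Fin r × Fin m₂ → ℝ := fun x =>
    (1 - p₂) + (p₂ - p₁) * (if x.2.2 = 0 then (m₂ : ℝ) else 0) +
      (p₁ - p₀) * ((if x.2.1 = 0 then (r : ℝ) else 0) * (if x.2.2 = 0 then (m₂ : ℝ) else 0)) +
      p₀ * ((if x.1 = 0 then (k : ℝ) else 0) *
        ((if x.2.1 = 0 then (r : ℝ) else 0) * (if x.2.2 = 0 then (m₂ : ℝ) else 0))) with hd
  have h1 : ((1 : Matrix (Fin k) (Fin k) ℝ) ⊗ₖ ((1 : Matrix (Fin r) (Fin r) ℝ) ⊗ₖ Jm m₂)) * U =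
      U * ((1 : Matrix (Fin k) (Fin k) ℝ) ⊗ₖ ((1 : Matrix (Fin r) (Fin r) ℝ) ⊗ₖ Dm m₂)) := by
    rw [hU]
    conv_lhs => rw [← Matrix.mul_kronecker_mul, ← Matrix.mul_kronecker_mul, Matrix.one_mul,
      Matrix.one_mul, J_mul_V]
    conv_rhs => rw [← Matrix.mul_kronecker_mul, ← Matrix.mul_kronecker_mul, Matrix.mul_one,
      Matrix.mul_one]
  have h2 : ((1 : Matrix (Fin k) (Fin k) ℝ) ⊗ₖ (Jm r ⊗ₖ Jm m₂)) * U =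
      U * ((1 : Matrix (Fin k) (Fin k) ℝ) ⊗ₖ (Dm r ⊗ₖ Dm m₂)) := by
    rw [hU]
    conv_lhs => rw [← Matrix.mul_kronecker_mul, ← Matrix.mul_kronecker_mul, Matrix.one_mul,
      J_mul_V, J_mul_V]
    conv_rhs => rw [← Matrix.mul_kronecker_mul, ← Matrix.mul_kronecker_mul, Matrix.mul_one]
  have h3 : (Jm k ⊗ₖ (Jm r ⊗ₖ Jm m₂)) * U = U * (Dm k ⊗ₖ (Dm r ⊗ₖ Dm m₂)) := by
    rw [hU]
    conv_lhs => rw [← Matrix.mul_kronecker_mul, ← Matrix.mul_kronecker_mul, J_mul_V, J_mul_V,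
      J_mul_V]
    conv_rhs => rw [← Matrix.mul_kronecker_mul, ← Matrix.mul_kronecker_mul]
  have hdiag : (1 - p₂) • (1 : Matrix (Fin k × Fin r × Fin m₂) (Fin k × Fin r × Fin m₂) ℝ) +
      (p₂ - p₁) • ((1 : Matrix (Fin k) (Fin k) ℝ) ⊗ₖ ((1 : Matrix (Fin r) (Fin r) ℝ) ⊗ₖ Dm m₂)) +
      (p₁ - p₀) • ((1 : Matrix (Fin k) (Fin k) ℝ) ⊗ₖ (Dm r ⊗ₖ Dm m₂)) +
      p₀ • (Dm k ⊗ₖ (Dm r ⊗ₖ Dm m₂)) = Matrix.diagonal d := by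
    simp only [Dm]
    rw [← Matrix.diagonal_one (n := Fin k) (α := ℝ), ← Matrix.diagonal_one (n := Fin r) (α := ℝ),
      Matrix.diagonal_kronecker_diagonal, Matrix.diagonal_kronecker_diagonal,
      Matrix.diagonal_kronecker_diagonal, Matrix.diagonal_kronecker_diagonal,
      Matrix.diagonal_kronecker_diagonal,
      ← Matrix.diagonal_one (n := Fin k × Fin r × Fin m₂) (α := ℝ),
      ← Matrix.diagonal_smul, ← Matrix.diagonal_smul, ← Matrix.diagonal_smul,
      ← Matrix.diagonal_smul, Matrix.diagonal_add, Matrix.diagonal_add, Matrix.diagonal_add]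
    refine congrArg Matrix.diagonal (funext fun x => ?_)
    obtain ⟨a, b, c⟩ := x
    simp only [hd, Pi.smul_apply, smul_eq_mul]
    split_ifs <;> ring
  have hQU : Q * U = U * Matrix.diagonal d := by
    rw [hQ, add_mul, add_mul, add_mul, smul_mul_assoc, smul_mul_assoc, smul_mul_assoc,
      smul_mul_assoc, Matrix.one_mul, h1, h2, h3, ← hdiag, mul_add, mul_add, mul_add,
      Matrix.mul_smul, Matrix.mul_smul, Matrix.mul_smul, Matrix.mul_smul, Matrix.mul_one]
  have hdetU : U.det ≠ 0 := by
    have hk' : (0 : ℝ) < k := by exact_mod_cast hk0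
    have hr' : (0 : ℝ) < r := by exact_mod_cast hr0
    have hm' : (0 : ℝ) < m₂ := by exact_mod_cast hm₂
    rw [hU, Matrix.det_kronecker, Matrix.det_kronecker, det_Vm, det_Vm, det_Vm]
    positivity
  have hstep : P.charpoly = (Matrix.diagonal d).charpoly := by
    calc P.charpoly = (Matrix.reindex e.symm e.symm P).charpoly :=
          (Matrix.charpoly_reindex e.symm P).symm
      _ = Q.charpoly := by rw [hPQ]
      _ = (Matrix.diagonal d).charpoly := charpoly_of_similar Q U _ hQU hdetU
  rw [hstep, TwoRSB.charpoly_diagonal]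
  have hNm1 : N / m₁ = k := by rw [hk, Nat.mul_div_cancel_left _ hm₁]
  have hNm2 : N / m₂ = r * k := by rw [hk, hr, mul_assoc, Nat.mul_div_cancel_left _ hm₂]
  have hm1cast : (m₁ : ℝ) = (m₂ : ℝ) * r := by rw [hr]; push_cast; ring
  have hNcast : (N : ℝ) = (m₂ : ℝ) * r * k := by rw [hk, hr]; push_cast; ring
  have hd0 : ∀ x : Fin k × Fin r × Fin m₂, x.2.2 ≠ 0 →
      X - C (d x) = X - C (1 - p₂) := by
    intro x h
    have : d x = 1 - p₂ := by rw [hd]; simp [h]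
    rw [this]
  have hd1 : ∀ (a : Fin k) (b : Fin r), b ≠ 0 →
      X - C (d (a, (b, 0))) = X - C ((1 - p₂) + (m₂ : ℝ) * (p₂ - p₁)) := by
    intro a b h
    have : d (a, (b, 0)) = (1 - p₂) + (m₂ : ℝ) * (p₂ - p₁) := by
      rw [hd]; simp [h]; ring
    rw [this]
  have hd2 : ∀ a : Fin k, a ≠ 0 →
      X - C (d (a, (0, 0))) =
        X - C ((1 - p₂) + (m₂ : ℝ) * (p₂ - p₁) + (m₁ : ℝ) * (p₁ - p₀)) := by
    intro a h
    have : d (a, (0, 0)) = (1 - p₂) + (m₂ : ℝ) * (p₂ - p₁) + (m₁ : ℝ) * (p₁ - p₀) := by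
      rw [hd]; simp [h]; rw [hm1cast]; ring
    rw [this]
  have hd3 : X - C (d (0, (0, 0))) =
      X - C ((1 - p₂) + (m₂ : ℝ) * (p₂ - p₁) + (m₁ : ℝ) * (p₁ - p₀) + (N : ℝ) * p₀) := by
    have : d (0, (0, 0)) =
        (1 - p₂) + (m₂ : ℝ) * (p₂ - p₁) + (m₁ : ℝ) * (p₁ - p₀) + (N : ℝ) * p₀ := by
      rw [hd]; simp; rw [hm1cast, hNcast]; ring
    rw [this]
  have hexp0 : N - N / m₂ = (m₂ - 1) * (r * k) := by
    rw [hNm2, hk, hr, Nat.sub_mul, one_mul, mul_assoc]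
  have hexp1 : N / m₂ - N / m₁ = (r - 1) * k := by
    rw [hNm1, hNm2, Nat.sub_mul, one_mul]
  have hexp2 : N / m₁ - 1 = k - 1 := by rw [hNm1]
  calc (∏ x : Fin k × Fin r × Fin m₂, (X - C (d x)))
      = ∏ a : Fin k, ∏ y : Fin r × Fin m₂, (X - C (d (a, y))) := Fintype.prod_prod_type _
    _ = ∏ a : Fin k, ∏ b : Fin r, ∏ c : Fin m₂, (X - C (d (a, (b, c)))) :=
        Finset.prod_congr rfl fun a _ => Fintype.prod_prod_type _
    _ = ∏ a : Fin k, ∏ b : Fin r,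
          ((X - C (d (a, (b, 0)))) * (X - C (1 - p₂)) ^ (m₂ - 1)) :=
        Finset.prod_congr rfl fun a _ => Finset.prod_congr rfl fun b _ =>
          prod_fin_of_ne _ _ (fun c hc => hd0 (a, (b, c)) hc)
    _ = ∏ a : Fin k, ((∏ b : Fin r, (X - C (d (a, (b, 0))))) *
          ((X - C (1 - p₂)) ^ (m₂ - 1)) ^ r) := by
        refine Finset.prod_congr rfl fun a _ => ?_
        rw [Finset.prod_mul_distrib, Finset.prod_const, Finset.card_univ, Fintype.card_fin]
    _ = ∏ a : Fin k, (((X - C (d (a, (0, 0)))) *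
          (X - C ((1 - p₂) + (m₂ : ℝ) * (p₂ - p₁))) ^ (r - 1)) *
          ((X - C (1 - p₂)) ^ (m₂ - 1)) ^ r) := by
        refine Finset.prod_congr rfl fun a _ => ?_
        rw [prod_fin_of_ne _ _ (fun b hb => hd1 a b hb)]
    _ = (((X - C (d (0, (0, 0)))) *
          (X - C ((1 - p₂) + (m₂ : ℝ) * (p₂ - p₁) + (m₁ : ℝ) * (p₁ - p₀))) ^ (k - 1)) *
          ((X - C ((1 - p₂) + (m₂ : ℝ) * (p₂ - p₁))) ^ (r - 1)) ^ k) *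
          (((X - C (1 - p₂)) ^ (m₂ - 1)) ^ r) ^ k := by
        rw [Finset.prod_mul_distrib, Finset.prod_mul_distrib, Finset.prod_const,
          Finset.prod_const, Finset.card_univ, Fintype.card_fin]
        congr 2
        exact prod_fin_of_ne _ _ (fun a ha => hd2 a ha)
    _ = (X - C (1 - p₂)) ^ (N - N / m₂) *
        (X - C ((1 - p₂) + (m₂ : ℝ) * (p₂ - p₁))) ^ (N / m₂ - N / m₁) *
        (X - C ((1 - p₂) + (m₂ : ℝ) * (p₂ - p₁) + (m₁ : ℝ) * (p₁ - p₀))) ^ (N / m₁ - 1) *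
        (X - C ((1 - p₂) + (m₂ : ℝ) * (p₂ - p₁) + (m₁ : ℝ) * (p₁ - p₀) + (N : ℝ) * p₀)) := by
        rw [hd3, hexp0, hexp1, hexp2]
        ring
end

section
/- Let r ≥ 1 and let N, m₁, …, m_r be positive integers with m_r | m_{r−1} | ⋯ | m₁ | N, and let p₀, p₁, …, p_r ∈ ℝ. Set m₀ := N. Let P = (1−p_r)·I_N + Σ_{k=1}^{r} (p_k − p_{k−1})·(I_{N/m_k} ⊗ J_{m_k}) + p₀·J_N. Then the spectrum of P, counted with multiplicity, is: the eigenvalue 1 − p_r with multiplicity N − N/m_r; for each j ∈ {1, …, r}, the eigenvalue (1 − p_r) + Σ_{k=j}^{r} m_k(p_k − p_{k−1}) with multiplicity N/m_j − N/m_{j−1}; and the eigenvalue (1 − p_r) + Σ_{k=1}^{r} m_k(p_k − p_{k−1}) + N·p₀ with multiplicity 1. -/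
open Finset Polynomial

private lemma div_coarse {a c x y : ℕ} (hca : c ∣ a) (h : x / c = y / c) : x / a = y / a := by
  obtain ⟨e, rfl⟩ := hca
  rw [← Nat.div_div_eq_div_mul, ← Nat.div_div_eq_div_mul, h]

private lemma eq_of_div_eq {a x y : ℕ} (ha : 0 < a) (hx : a ∣ x) (hy : a ∣ y)
    (h : x / a = y / a) : x = y := by
  obtain ⟨u, rfl⟩ := hx; obtain ⟨v, rfl⟩ := hy
  rw [Nat.mul_div_cancel_left _ ha, Nat.mul_div_cancel_left _ ha] at h
  rw [h]

private lemma card_block {N c : ℕ} (hc : 0 < c) (hcN : c ∣ N) {v : ℕ} (hv : v < N) :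
    ((Finset.range N).filter fun t => t / c = v / c).card = c := by
  have hkey : ((Finset.range N).filter fun t => t / c = v / c) =
      Finset.Ico (v / c * c) (v / c * c + c) := by
    have hub : v / c * c + c ≤ N := by
      have h1 : v / c < N / c := Nat.div_lt_div_of_lt_of_dvd hcN hv
      have h2 : (v / c + 1) * c ≤ N / c * c := Nat.mul_le_mul_right c h1
      rw [Nat.div_mul_cancel hcN, Nat.succ_mul] at h2
      omega
    have hiff : ∀ t, t / c = v / c ↔ v / c * c ≤ t ∧ t < v / c * c + c := by
      intro t
      constructor
      · intro heq
        have h1 : t / c * c ≤ t := Nat.div_mul_le_self t c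
        have h2 : t < (t / c + 1) * c := by
          have ha := Nat.div_add_mod t c
          have hb := Nat.mod_lt t hc
          have hcm : t / c * c = c * (t / c) := Nat.mul_comm _ _
          rw [Nat.succ_mul]
          omega
        rw [heq, Nat.succ_mul] at h2
        rw [heq] at h1
        omega
      · rintro ⟨h1, h2⟩
        have h3 : v / c ≤ t / c := (Nat.le_div_iff_mul_le hc).2 h1
        have h4 : t / c < v / c + 1 := (Nat.div_lt_iff_lt_mul hc).2 (by rw [Nat.succ_mul]; omega)
        omega
    ext t
    simp only [Finset.mem_filter, Finset.mem_range, Finset.mem_Ico, hiff t]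
    omega
  rw [hkey, Nat.card_Ico]
  omega

private lemma count_block {N c : ℕ} (hc : 0 < c) (hcN : c ∣ N) {v : ℕ} (hv : v < N) :
    ∑ t : Fin N, (if (t : ℕ) / c = v / c then (1 : ℝ) else 0) = c := by
  rw [Fin.sum_univ_eq_sum_range (fun t => if t / c = v / c then (1 : ℝ) else 0) N,
    Finset.sum_boole, card_block hc hcN hv]

private lemma sum_ind_mul {N a c : ℕ} (hc : 0 < c) (hca : c ∣ a) (haN : a ∣ N)
    (u : ℕ) {v : ℕ} (hv : v < N) :
    ∑ t : Fin N, (if (t : ℕ) / a = u / a then (1 : ℝ) else 0) *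
      (if (t : ℕ) / c = v / c then 1 else 0)
      = c * (if v / a = u / a then 1 else 0) := by
  have hcN : c ∣ N := hca.trans haN
  have hpt : ∀ t : Fin N, (if (t : ℕ) / a = u / a then (1 : ℝ) else 0) *
      (if (t : ℕ) / c = v / c then 1 else 0)
      = (if v / a = u / a then (1 : ℝ) else 0) * (if (t : ℕ) / c = v / c then 1 else 0) := by
    intro t
    by_cases h : (t : ℕ) / c = v / c
    · rw [div_coarse hca h]
    · simp [h]
  rw [Finset.sum_congr rfl fun t _ => hpt t, ← Finset.mul_sum, count_block hc hcN hv, mul_comm]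

private def Mex (r : ℕ) (m : ℕ → ℕ) (k : ℕ) : ℕ := if k ≤ r then m k else 1

private lemma Mex_top (r : ℕ) (m : ℕ → ℕ) : Mex r m (r + 1) = 1 := by simp [Mex]

private def lev (r : ℕ) (m : ℕ → ℕ) (i : ℕ) : ℕ :=
  Nat.find (⟨r + 1, by simp [Mex]⟩ : ∃ k, Mex r m k ∣ i)

private lemma lev_le (r : ℕ) (m : ℕ → ℕ) (i : ℕ) : lev r m i ≤ r + 1 :=
  Nat.find_le (by simp [Mex])

private lemma lev_dvd (r : ℕ) (m : ℕ → ℕ) (i : ℕ) : Mex r m (lev r m i) ∣ i :=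
  Nat.find_spec (⟨r + 1, by simp [Mex]⟩ : ∃ k, Mex r m k ∣ i)

private lemma lev_min {r : ℕ} {m : ℕ → ℕ} {i k : ℕ} (h : k < lev r m i) :
    ¬ Mex r m k ∣ i :=
  Nat.find_min (⟨r + 1, by simp [Mex]⟩ : ∃ k, Mex r m k ∣ i) h

private lemma charpoly_diag {n : ℕ} (d : Fin n → ℝ) :
    (Matrix.diagonal d).charpoly = ∏ i, (X - C (d i)) := by
  unfold Matrix.charpoly
  have h : Matrix.charmatrix (Matrix.diagonal d) = Matrix.diagonal fun i => X - C (d i) := by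
    ext i j
    by_cases hij : i = j
    · subst hij; simp [Matrix.charmatrix_apply, Matrix.diagonal_apply_eq]
    · simp [Matrix.charmatrix_apply, Matrix.diagonal_apply_ne, hij]
  rw [h, Matrix.det_diagonal]

private lemma charpoly_conj {n : Type*} [DecidableEq n] [Fintype n]
    (S T D : Matrix n n ℝ) (hST : S * T = 1) :
    (S * D * T).charpoly = D.charpoly := by
  unfold Matrix.charpoly
  have hS : S.map (C : ℝ →+* ℝ[X]) * T.map C = 1 := by
    rw [← Matrix.map_mul, hST, Matrix.map_one _ (map_zero C) (map_one C)]
  have h1 : Matrix.charmatrix (S * D * T) =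
      S.map C * Matrix.charmatrix D * T.map C := by
    rw [Matrix.charmatrix, Matrix.charmatrix]
    simp only [RingHom.mapMatrix_apply]
    rw [Matrix.mul_sub, Matrix.sub_mul, Matrix.map_mul, Matrix.map_mul]
    congr 1
    rw [← (Matrix.scalar_commute (X : ℝ[X]) (Commute.all X) (S.map C)).eq,
      Matrix.mul_assoc, hS, Matrix.mul_one]
  rw [h1, Matrix.det_mul, Matrix.det_mul]
  have h2 : (S.map (C : ℝ →+* ℝ[X])).det * (T.map C).det = 1 := by
    rw [← Matrix.det_mul, hS, Matrix.det_one]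
  calc (S.map (C : ℝ →+* ℝ[X])).det * (Matrix.charmatrix D).det * (T.map C).det
      = (Matrix.charmatrix D).det * ((S.map C).det * (T.map C).det) := by ring
    _ = (Matrix.charmatrix D).det := by rw [h2, mul_one]

/-! ### block indicator machinery -/

private def bi (d x t : ℕ) : ℝ := if t / d = x / d then 1 else 0

private def eps (j : ℕ) : ℝ := if j = 0 then 0 else 1

private lemma bi_self (d x : ℕ) : bi d x x = 1 := by simp [bi]

private lemma sum_bi {N c : ℕ} (hc : 0 < c) (hcN : c ∣ N) {v : ℕ} (hv : v < N) :
    ∑ t : Fin N, bi c v ↑t = c := count_block hc hcN hv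

private lemma sum_bi_bi {N a c : ℕ} (hc : 0 < c) (hca : c ∣ a) (haN : a ∣ N)
    (u : ℕ) {v : ℕ} (hv : v < N) :
    ∑ t : Fin N, bi a u ↑t * bi c v ↑t = c * bi a u v :=
  sum_ind_mul hc hca haN u hv

private lemma sum_bi_bi' {N a c : ℕ} (hc : 0 < c) (hca : c ∣ a) (haN : a ∣ N)
    (u : ℕ) {v : ℕ} (hv : v < N) :
    ∑ t : Fin N, bi c v ↑t * bi a u ↑t = c * bi a u v := by
  rw [← sum_bi_bi hc hca haN u hv]
  exact Finset.sum_congr rfl fun t _ => mul_comm _ _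

private lemma bi_coarse {a c x y u : ℕ} (hca : c ∣ a) (h : x / c = y / c) :
    bi a u x = bi a u y := by
  unfold bi
  rw [div_coarse hca h]

/-! ### the explicit eigenbasis matrices -/

private noncomputable def Smat (r N : ℕ) (m : ℕ → ℕ) : Matrix (Fin N) (Fin N) ℝ :=
  Matrix.of fun t i => bi (Mex r m (lev r m ↑i)) ↑i ↑t -
    eps (lev r m ↑i) * bi (Mex r m (lev r m ↑i))
      (Mex r m (lev r m ↑i - 1) * (↑i / Mex r m (lev r m ↑i - 1))) ↑t

private noncomputable def Tmat (r N : ℕ) (m : ℕ → ℕ) : Matrix (Fin N) (Fin N) ℝ :=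
  Matrix.of fun i t => (Mex r m (lev r m ↑i) : ℝ)⁻¹ * bi (Mex r m (lev r m ↑i)) ↑i ↑t -
    eps (lev r m ↑i) * (Mex r m (lev r m ↑i - 1) : ℝ)⁻¹ * bi (Mex r m (lev r m ↑i - 1)) ↑i ↑t

private def lamd (r N : ℕ) (m : ℕ → ℕ) (p : ℕ → ℝ) (j : ℕ) : ℝ :=
  (1 - p r) + (∑ k ∈ Finset.Icc (max 1 j) r, (m k : ℝ) * (p k - p (k - 1))) +
    (if j = 0 then (N : ℝ) * p 0 else 0)

private lemma key_expand {N : ℕ} (c₁ c₂ e : ℝ) (a₁ a₂ b : ℕ) (u₁ u₂ v w : ℕ) :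
    ∑ t : Fin N, (c₁ * bi a₁ u₁ ↑t - c₂ * bi a₂ u₂ ↑t) * (bi b v ↑t - e * bi b w ↑t)
      = c₁ * (∑ t : Fin N, bi a₁ u₁ ↑t * bi b v ↑t)
        - c₁ * e * (∑ t : Fin N, bi a₁ u₁ ↑t * bi b w ↑t)
        - c₂ * (∑ t : Fin N, bi a₂ u₂ ↑t * bi b v ↑t)
        + c₂ * e * (∑ t : Fin N, bi a₂ u₂ ↑t * bi b w ↑t) := by
  rw [Finset.mul_sum, Finset.mul_sum, Finset.mul_sum, Finset.mul_sum,
    ← Finset.sum_sub_distrib, ← Finset.sum_sub_distrib, ← Finset.sum_add_distrib]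
  exact Finset.sum_congr rfl fun t _ => by ring

private lemma key_expand2 {N : ℕ} (e : ℝ) (d b : ℕ) (u v w : ℕ) :
    ∑ t : Fin N, bi d u ↑t * (bi b v ↑t - e * bi b w ↑t)
      = (∑ t : Fin N, bi d u ↑t * bi b v ↑t)
        - e * (∑ t : Fin N, bi d u ↑t * bi b w ↑t) := by
  rw [Finset.mul_sum, ← Finset.sum_sub_distrib]
  exact Finset.sum_congr rfl fun t _ => by ring

/-! ### structural facts about `Mex` and `lev` -/

private lemma Mex_pos {r : ℕ} {m : ℕ → ℕ} (hmpos : ∀ k ≤ r, 0 < m k) (k : ℕ) :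
    0 < Mex r m k := by
  unfold Mex
  split
  · exact hmpos _ ‹_›
  · exact one_pos

private lemma Mex_dvd_of_le {r : ℕ} {m : ℕ → ℕ}
    (hchain : ∀ k ∈ Finset.Icc 1 r, m k ∣ m (k - 1)) {k j : ℕ} (hkj : k ≤ j) :
    Mex r m j ∣ Mex r m k := by
  by_cases hj : j ≤ r
  · have hstep : ∀ n, k + n ≤ r → m (k + n) ∣ m k := by
      intro n
      induction n with
      | zero => exact fun _ => dvd_rfl
      | succ n ih =>
        intro h
        have h1 : m (k + n + 1) ∣ m (k + n) := by
          have h2 := hchain (k + n + 1) (by simp only [Finset.mem_Icc]; omega)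
          simpa using h2
        exact h1.trans (ih (by omega))
    have h3 := hstep (j - k) (by omega)
    have hjk : k + (j - k) = j := by omega
    rw [hjk] at h3
    unfold Mex
    rw [if_pos hj, if_pos (le_trans hkj hj)]
    exact h3
  · unfold Mex
    rw [if_neg hj]
    exact one_dvd _

private lemma Mex_dvd_N {r N : ℕ} {m : ℕ → ℕ} (hm0 : m 0 = N)
    (hchain : ∀ k ∈ Finset.Icc 1 r, m k ∣ m (k - 1)) (k : ℕ) :
    Mex r m k ∣ N := by
  have h := Mex_dvd_of_le hchain (Nat.zero_le k)
  have h0 : Mex r m 0 = N := by unfold Mex; rw [if_pos (Nat.zero_le r), hm0]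
  rw [h0] at h
  exact h

private lemma lev_le_of_dvd {r : ℕ} {m : ℕ → ℕ} {i k : ℕ} (h : Mex r m k ∣ i) :
    lev r m i ≤ k :=
  Nat.find_le h

private lemma Mex_lev_sub_one_not_dvd {r : ℕ} {m : ℕ → ℕ} {i : ℕ}
    (h : lev r m i ≠ 0) : ¬ Mex r m (lev r m i - 1) ∣ i :=
  lev_min (by omega)

private lemma Mex_eq_m {r k : ℕ} {m : ℕ → ℕ} (h : k ≤ r) : Mex r m k = m k := by
  unfold Mex; rw [if_pos h]

private lemma TS_one {r N : ℕ} {m : ℕ → ℕ} (hN : 0 < N) (hm0 : m 0 = N)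
    (hmpos : ∀ k ≤ r, 0 < m k) (hchain : ∀ k ∈ Finset.Icc 1 r, m k ∣ m (k - 1)) :
    Tmat r N m * Smat r N m = 1 := by
  have hMpos := Mex_pos hmpos
  have hMN := Mex_dvd_N hm0 hchain
  have hMdvd : ∀ {a b : ℕ}, a ≤ b → Mex r m b ∣ Mex r m a := fun h => Mex_dvd_of_le hchain h
  ext i i'
  rw [Matrix.mul_apply, Matrix.one_apply]
  set j := lev r m ↑i with hj
  set j' := lev r m ↑i' with hj'
  set A := Mex r m j with hA
  set A1 := Mex r m (j - 1) with hA1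
  set B := Mex r m j' with hB
  set B1 := Mex r m (j' - 1) with hB1
  set Lq := B1 * (↑i' / B1) with hLqd
  have hstart : ∀ t : Fin N, Tmat r N m i t * Smat r N m t i' =
      ((A : ℝ)⁻¹ * bi A ↑i ↑t - eps j * (A1 : ℝ)⁻¹ * bi A1 ↑i ↑t) *
        (bi B ↑i' ↑t - eps j' * bi B Lq ↑t) := fun t => rfl
  have hiN : (↑i : ℕ) < N := i.isLt
  have hi'N : (↑i' : ℕ) < N := i'.isLt
  have hLqlt : Lq < N := lt_of_le_of_lt (Nat.mul_div_le ↑i' B1) hi'N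
  have hLqB1 : Lq / B1 = ↑i' / B1 := Nat.mul_div_cancel_left _ (hMpos _)
  have hB1Lq : B1 ∣ Lq := dvd_mul_right _ _
  have hApos : 0 < A := hMpos j
  have hA1pos : 0 < A1 := hMpos (j - 1)
  have hBpos : 0 < B := hMpos j'
  have hB1pos : 0 < B1 := hMpos (j' - 1)
  have hANd : A ∣ N := hMN j
  have hA1Nd : A1 ∣ N := hMN (j - 1)
  have hBNd : B ∣ N := hMN j'
  have hB1Nd : B1 ∣ N := hMN (j' - 1)
  have hjdvd : A ∣ (↑i : ℕ) := by rw [hA, hj]; exact lev_dvd r m ↑i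
  have hj'dvd : B ∣ (↑i' : ℕ) := by rw [hB, hj']; exact lev_dvd r m ↑i'
  have hnotdvd : j ≠ 0 → ¬ A1 ∣ (↑i : ℕ) := by
    intro h0
    rw [hA1, hj]
    exact Mex_lev_sub_one_not_dvd (by rw [← hj]; exact h0)
  have hAA1 : A ∣ A1 := by rw [hA, hA1]; exact hMdvd (by omega)
  have hBB1 : B ∣ B1 := by rw [hB, hB1]; exact hMdvd (by omega)
  have hAeqN : j = 0 → A = N := by
    intro h0
    rw [hA, h0, Mex_eq_m (Nat.zero_le r), hm0]
  have hdltB1A : j < j' → B1 ∣ A := by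
    intro h; rw [hA, hB1]; exact hMdvd (by omega)
  have hdltB1A1 : j < j' → B1 ∣ A1 := by
    intro h; rw [hA1, hB1]; exact hMdvd (by omega)
  have hdgtAB : j' ≤ j → A ∣ B := by
    intro h; rw [hA, hB]; exact hMdvd h
  have hdgtA1B : j' < j → A1 ∣ B := by
    intro h; rw [hA1, hB]; exact hMdvd (by omega)
  have hA1Beq : j = j' → A1 = B1 := by intro h; rw [hA1, hB1, h]
  have hlevne : j ≠ j' → i ≠ i' := by
    intro h hii
    rw [hii] at hj
    rw [← hj'] at hj
    exact h hj
  clear_value Lq B1 B A1 A j' j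
  rw [Finset.sum_congr rfl fun t _ => hstart t, key_expand]
  have hAne : (A : ℝ) ≠ 0 := (Nat.cast_pos.mpr hApos).ne'
  have hA1ne : (A1 : ℝ) ≠ 0 := (Nat.cast_pos.mpr hA1pos).ne'
  rcases Nat.lt_trichotomy j j' with hlt | heq | hgt
  · -- j < j'
    have hj'0 : j' ≠ 0 := by omega
    have heps' : eps j' = 1 := by simp [eps, hj'0]
    have hB1A := hdltB1A hlt
    have hB1A1 := hdltB1A1 hlt
    have hBA : B ∣ A := hBB1.trans hB1A
    have hBA1 : B ∣ A1 := hBB1.trans hB1A1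
    rw [sum_bi_bi hBpos hBA hANd ↑i hi'N,
      sum_bi_bi hBpos hBA hANd ↑i hLqlt,
      sum_bi_bi hBpos hBA1 hA1Nd ↑i hi'N,
      sum_bi_bi hBpos hBA1 hA1Nd ↑i hLqlt]
    have hcan : bi A ↑i Lq = bi A ↑i ↑i' := bi_coarse hB1A hLqB1
    have hcan1 : bi A1 ↑i Lq = bi A1 ↑i ↑i' := bi_coarse hB1A1 hLqB1
    rw [if_neg (hlevne (by omega)), heps', hcan, hcan1]
    ring
  · -- j = j'
    have hABeq : A = B := by rw [hA, hB, heq]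
    have hBA : B ∣ A := by rw [hABeq]
    have hdvdi' : A ∣ (↑i' : ℕ) := by rw [hABeq]; exact hj'dvd
    by_cases h0 : j = 0
    · have hj'0 : j' = 0 := by omega
      have hi0 : (↑i : ℕ) = 0 := Nat.eq_zero_of_dvd_of_lt (hAeqN h0 ▸ hjdvd) hiN
      have hi'0 : (↑i' : ℕ) = 0 :=
        Nat.eq_zero_of_dvd_of_lt (hAeqN h0 ▸ hdvdi') hi'N
      have hii : i = i' := Fin.ext (by rw [hi0, hi'0])
      have heps : eps j = 0 := by simp [eps, h0]
      have heps' : eps j' = 0 := by simp [eps, hj'0]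
      rw [if_pos hii, heps, heps', sum_bi_bi hBpos hBA hANd ↑i hi'N]
      have hbi : bi A ↑i ↑i' = 1 := by
        unfold bi
        rw [if_pos (by rw [hi0, hi'0])]
      rw [hbi, ← hABeq]
      field_simp
      ring
    · have hj'0 : j' ≠ 0 := by omega
      have heps : eps j = 1 := by simp [eps, h0]
      have heps' : eps j' = 1 := by simp [eps, hj'0]
      have hBA1 : B ∣ A1 := by rw [← hABeq]; exact hAA1
      rw [sum_bi_bi hBpos hBA hANd ↑i hi'N,
        sum_bi_bi hBpos hBA hANd ↑i hLqlt,
        sum_bi_bi hBpos hBA1 hA1Nd ↑i hi'N,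
        sum_bi_bi hBpos hBA1 hA1Nd ↑i hLqlt]
      have hcan1 : bi A1 ↑i Lq = bi A1 ↑i ↑i' := by
        rw [hA1Beq heq]
        exact bi_coarse dvd_rfl hLqB1
      have hALq : A ∣ Lq := ((hA1Beq heq) ▸ hAA1).trans hB1Lq
      have hb2 : bi A ↑i Lq = 0 := by
        unfold bi
        rw [if_neg]
        intro hyp
        have hLqi : Lq = (↑i : ℕ) := eq_of_div_eq hApos hALq hjdvd hyp
        exact (hnotdvd h0) (by rw [← hLqi, hA1Beq heq]; exact hB1Lq)
      have hb3 : bi A ↑i ↑i' = if i = i' then 1 else 0 := by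
        unfold bi
        by_cases hii : i = i'
        · rw [if_pos hii, if_pos (by rw [hii])]
        · rw [if_neg hii, if_neg]
          intro hyp
          exact hii (Fin.ext (eq_of_div_eq hApos hdvdi' hjdvd hyp).symm)
      rw [hcan1, hb2, hb3, heps, heps']
      by_cases hii : i = i'
      · have hone : bi A1 ↑i ↑i' = 1 := by rw [hii]; exact bi_self _ _
        rw [if_pos hii, hone, ← hABeq]
        field_simp
        ring
      · rw [if_neg hii]
        ring
  · -- j' < j
    have hj0 : j ≠ 0 := by omega
    have heps : eps j = 1 := by simp [eps, hj0]
    have hAB := hdgtAB (by omega)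
    have hA1B := hdgtA1B hgt
    rw [sum_bi_bi' hApos hAB hBNd ↑i' hiN,
      sum_bi_bi' hApos hAB hBNd Lq hiN,
      sum_bi_bi' hA1pos hA1B hBNd ↑i' hiN,
      sum_bi_bi' hA1pos hA1B hBNd Lq hiN]
    rw [if_neg (hlevne (by omega)), heps]
    field_simp
    ring

private lemma PS_eq {r N : ℕ} {m : ℕ → ℕ} {p : ℕ → ℝ} (hN : 0 < N) (hm0 : m 0 = N)
    (hmpos : ∀ k ≤ r, 0 < m k) (hchain : ∀ k ∈ Finset.Icc 1 r, m k ∣ m (k - 1))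
    (P : Matrix (Fin N) (Fin N) ℝ)
    (hP : ∀ i j : Fin N,
      P i j = (if i = j then 1 - p r else 0) +
        (∑ k ∈ Finset.Icc 1 r,
          (p k - p (k - 1)) * (if (i : ℕ) / m k = (j : ℕ) / m k then 1 else 0)) + p 0) :
    P * Smat r N m =
      Smat r N m * Matrix.diagonal (fun i : Fin N => lamd r N m p (lev r m ↑i)) := by
  have hMpos := Mex_pos hmpos
  have hMN := Mex_dvd_N hm0 hchain
  have hMdvd : ∀ {a b : ℕ}, a ≤ b → Mex r m b ∣ Mex r m a := fun h => Mex_dvd_of_le hchain h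
  ext t i
  rw [Matrix.mul_apply, Matrix.mul_diagonal]
  set j := lev r m ↑i with hj
  set A := Mex r m j with hA
  set A1 := Mex r m (j - 1) with hA1
  set Lq := A1 * (↑i / A1) with hLqd
  have hSsi : ∀ s : Fin N, Smat r N m s i = bi A ↑i ↑s - eps j * bi A Lq ↑s :=
    fun s => rfl
  have hiN : (↑i : ℕ) < N := i.isLt
  have htN : (↑t : ℕ) < N := t.isLt
  have hLqlt : Lq < N := lt_of_le_of_lt (Nat.mul_div_le ↑i A1) hiN
  have hLqA1 : Lq / A1 = ↑i / A1 := Nat.mul_div_cancel_left _ (hMpos _)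
  have hA1Lq : A1 ∣ Lq := dvd_mul_right _ _
  have hApos : 0 < A := hMpos j
  have hA1pos : 0 < A1 := hMpos (j - 1)
  have hANd : A ∣ N := hMN j
  have hA1Nd : A1 ∣ N := hMN (j - 1)
  have hAA1 : A ∣ A1 := by rw [hA, hA1]; exact hMdvd (by omega)
  have hAeqN : j = 0 → A = N := fun h0 => by
    rw [hA, h0, Mex_eq_m (Nat.zero_le r), hm0]
  have hmkA : ∀ k, j ≤ k → k ≤ r → m k ∣ A := by
    intro k hjk hkr
    have h := hMdvd hjk
    rw [Mex_eq_m hkr] at h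
    rw [hA]
    exact h
  have hAmk : ∀ k, k ≤ j → k ≤ r → A ∣ m k := by
    intro k hkj hkr
    have h := hMdvd hkj
    rw [Mex_eq_m hkr] at h
    rw [hA]
    exact h
  have hA1mk : ∀ k, k ≤ j - 1 → k ≤ r → A1 ∣ m k := by
    intro k hkj hkr
    have h := hMdvd hkj
    rw [Mex_eq_m hkr] at h
    rw [hA1]
    exact h
  clear_value Lq A1 A j
  -- expand P entries
  have hsplit : ∀ s : Fin N,
      P t s * Smat r N m s i
        = (if t = s then (1 - p r) * Smat r N m s i else 0)
          + (∑ k ∈ Finset.Icc 1 r,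
              (p k - p (k - 1)) * (bi (m k) ↑t ↑s * Smat r N m s i))
          + p 0 * Smat r N m s i := by
    intro s
    rw [hP t s, add_mul, add_mul, Finset.sum_mul]
    congr 2
    · split <;> simp
    · refine Finset.sum_congr rfl fun k _ => ?_
      have hbik : (if (↑t : ℕ) / m k = (↑s : ℕ) / m k then (1 : ℝ) else 0)
          = bi (m k) ↑t ↑s := by
        unfold bi
        simp [eq_comm]
      rw [hbik, mul_assoc]
  rw [Finset.sum_congr rfl fun s _ => hsplit s, Finset.sum_add_distrib,
    Finset.sum_add_distrib, Finset.sum_ite_eq]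
  simp only [Finset.mem_univ, if_true]
  rw [Finset.sum_comm]
  -- the middle sums
  have hinner : ∀ k ∈ Finset.Icc 1 r,
      ∑ s : Fin N, (p k - p (k - 1)) * (bi (m k) ↑t ↑s * Smat r N m s i)
        = ((p k - p (k - 1)) * (if j ≤ k then (m k : ℝ) else 0)) * Smat r N m t i := by
    intro k hk
    rw [Finset.mem_Icc] at hk
    have hmkpos : 0 < m k := hmpos k hk.2
    rw [← Finset.mul_sum,
      Finset.sum_congr rfl fun s _ => by rw [hSsi s], key_expand2]
    by_cases hjk : j ≤ k
    · have hd : m k ∣ A := hmkA k hjk hk.2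
      rw [sum_bi_bi' hmkpos hd hANd ↑i htN, sum_bi_bi' hmkpos hd hANd Lq htN,
        if_pos hjk, hSsi t]
      ring
    · have hd : A ∣ m k := hAmk k (by omega) hk.2
      have hd1 : A1 ∣ m k := hA1mk k (by omega) hk.2
      have hmkN : m k ∣ N := by
        have h := hMN k
        rw [Mex_eq_m hk.2] at h
        exact h
      have hj0 : j ≠ 0 := by omega
      have heps : eps j = 1 := by simp [eps, hj0]
      rw [sum_bi_bi hApos hd hmkN ↑t hiN, sum_bi_bi hApos hd hmkN ↑t hLqlt]
      have hcan : bi (m k) ↑t Lq = bi (m k) ↑t ↑i := bi_coarse hd1 hLqA1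
      rw [hcan, if_neg hjk, heps]
      ring
  rw [Finset.sum_congr rfl hinner]
  -- the p 0 part
  have hp0 : ∑ s : Fin N, p 0 * Smat r N m s i
      = (if j = 0 then (N : ℝ) * p 0 else 0) * Smat r N m t i := by
    rw [← Finset.mul_sum, Finset.sum_congr rfl fun s _ => hSsi s,
      Finset.sum_sub_distrib, ← Finset.mul_sum,
      sum_bi hApos hANd hiN, sum_bi hApos hANd hLqlt]
    by_cases hj0 : j = 0
    · have heps : eps j = 0 := by simp [eps, hj0]
      have hAN' : A = N := hAeqN hj0
      have hone : Smat r N m t i = 1 := by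
        rw [hSsi t, heps]
        have hbi : bi A ↑i ↑t = 1 := by
          unfold bi
          rw [hAN', Nat.div_eq_of_lt htN, Nat.div_eq_of_lt hiN]
          simp
        rw [hbi]
        ring
      rw [heps, hone, if_pos hj0, hAN']
      ring
    · have heps : eps j = 1 := by simp [eps, hj0]
      rw [heps, if_neg hj0]
      ring
  rw [hp0]
  -- assemble
  have hlam : lamd r N m p j
      = (1 - p r) + (∑ k ∈ Finset.Icc 1 r,
          (p k - p (k - 1)) * (if j ≤ k then (m k : ℝ) else 0))
        + (if j = 0 then (N : ℝ) * p 0 else 0) := by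
    unfold lamd
    have hptw : ∀ k ∈ Finset.Icc 1 r,
        (p k - p (k - 1)) * (if j ≤ k then (m k : ℝ) else 0)
          = if j ≤ k then (m k : ℝ) * (p k - p (k - 1)) else 0 :=
      fun k _ => by split <;> ring
    rw [Finset.sum_congr rfl hptw, ← Finset.sum_filter]
    have hset : (Finset.Icc 1 r).filter (fun k => j ≤ k) = Finset.Icc (max 1 j) r := by
      ext k
      simp only [Finset.mem_filter, Finset.mem_Icc, max_le_iff]
      omega
    rw [hset]
  rw [hlam, ← Finset.sum_mul]
  ring

private lemma card_dvd_filter {N d : ℕ} (hd : 0 < d) (hdN : d ∣ N) :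
    ((Finset.univ : Finset (Fin N)).filter fun i : Fin N => d ∣ (i : ℕ)).card = N / d := by
  rw [Finset.card_filter, Fin.sum_univ_eq_sum_range (fun i => if d ∣ i then 1 else 0) N,
    ← Finset.card_filter]
  have himg : (Finset.range N).filter (fun i => d ∣ i)
      = (Finset.range (N / d)).image (fun q => q * d) := by
    ext x
    simp only [Finset.mem_filter, Finset.mem_range, Finset.mem_image]
    constructor
    · rintro ⟨hx, hdvd⟩
      exact ⟨x / d, Nat.div_lt_div_of_lt_of_dvd hdN hx, Nat.div_mul_cancel hdvd⟩
    · rintro ⟨q, hq, rfl⟩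
      refine ⟨?_, dvd_mul_left d q⟩
      have h2 : (q + 1) * d ≤ N / d * d := Nat.mul_le_mul_right d hq
      rw [Nat.div_mul_cancel hdN, Nat.succ_mul] at h2
      omega
  rw [himg, Finset.card_image_of_injective _
    (fun a b hab => Nat.eq_of_mul_eq_mul_right hd hab), Finset.card_range]

private lemma lev_eq_iff {r : ℕ} {m : ℕ → ℕ}
    (hchain : ∀ k ∈ Finset.Icc 1 r, m k ∣ m (k - 1)) {i j : ℕ} (hj : 1 ≤ j) :
    lev r m i = j ↔ Mex r m j ∣ i ∧ ¬ Mex r m (j - 1) ∣ i := by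
  constructor
  · rintro rfl
    exact ⟨lev_dvd r m i, lev_min (by omega)⟩
  · rintro ⟨h1, h2⟩
    have hle : lev r m i ≤ j := lev_le_of_dvd h1
    by_contra hne
    have hlt : lev r m i ≤ j - 1 := by omega
    exact h2 ((Mex_dvd_of_le hchain hlt).trans (lev_dvd r m i))

private lemma card_lev_fiber {r N : ℕ} {m : ℕ → ℕ} (hm0 : m 0 = N)
    (hmpos : ∀ k ≤ r, 0 < m k) (hchain : ∀ k ∈ Finset.Icc 1 r, m k ∣ m (k - 1))
    {j : ℕ} (h1 : 1 ≤ j) :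
    ((Finset.univ : Finset (Fin N)).filter fun i : Fin N => lev r m ↑i = j).card
      = N / Mex r m j - N / Mex r m (j - 1) := by
  have hsub : ((Finset.univ : Finset (Fin N)).filter fun i : Fin N => Mex r m (j - 1) ∣ (i : ℕ))
      ⊆ (Finset.univ.filter fun i : Fin N => Mex r m j ∣ (i : ℕ)) := by
    intro x
    simp only [Finset.mem_filter, Finset.mem_univ, true_and]
    exact fun h => (Mex_dvd_of_le hchain (by omega)).trans h
  have heq : ((Finset.univ : Finset (Fin N)).filter fun i : Fin N => lev r m ↑i = j)
      = (Finset.univ.filter fun i : Fin N => Mex r m j ∣ (i : ℕ))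
        \ (Finset.univ.filter fun i : Fin N => Mex r m (j - 1) ∣ (i : ℕ)) := by
    ext x
    simp only [Finset.mem_filter, Finset.mem_sdiff, Finset.mem_univ, true_and]
    rw [lev_eq_iff hchain h1]
  rw [heq, Finset.card_sdiff_of_subset hsub,
    card_dvd_filter (Mex_pos hmpos j) (Mex_dvd_N hm0 hchain j),
    card_dvd_filter (Mex_pos hmpos (j - 1)) (Mex_dvd_N hm0 hchain (j - 1))]

private lemma card_lev_fiber0 {r N : ℕ} {m : ℕ → ℕ} (hN : 0 < N) (hm0 : m 0 = N) :
    ((Finset.univ : Finset (Fin N)).filter fun i : Fin N => lev r m ↑i = 0).card = 1 := by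
  have hset : ((Finset.univ : Finset (Fin N)).filter fun i : Fin N => lev r m ↑i = 0)
      = {(⟨0, hN⟩ : Fin N)} := by
    ext x
    simp only [Finset.mem_filter, Finset.mem_univ, true_and, Finset.mem_singleton]
    constructor
    · intro h
      have hd := lev_dvd r m ↑x
      rw [h, Mex_eq_m (Nat.zero_le r), hm0] at hd
      exact Fin.ext (Nat.eq_zero_of_dvd_of_lt hd x.isLt)
    · rintro rfl
      have h1 : lev r m (0 : ℕ) ≤ 0 :=
        lev_le_of_dvd (by rw [Mex_eq_m (Nat.zero_le r), hm0]; exact dvd_zero N)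
      simpa using h1
  rw [hset, Finset.card_singleton]

/-- **Spectrum of the r-rsb Parisi overlap matrix.**
For a divisibility chain `m_r ∣ m_{r−1} ∣ ⋯ ∣ m₁ ∣ N` (with the convention `m₀ = N`), the
matrix `P = (1 − p_r)·I_N + Σ_{k=1}^{r} (p_k − p_{k−1})·(I_{N/m_k} ⊗ J_{m_k}) + p₀·J_N` has:
eigenvalue `1 − p_r` with multiplicity `N − N/m_r`; for each `j ∈ {1,…,r}`, eigenvalue
`(1 − p_r) + Σ_{k=j}^{r} m_k (p_k − p_{k−1})` with multiplicity `N/m_j − N/m_{j−1}`; and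
eigenvalue `(1 − p_r) + Σ_{k=1}^{r} m_k (p_k − p_{k−1}) + N·p₀` with multiplicity `1`.
Stated as a factorization of the characteristic polynomial. -/
theorem rRSB_parisi_spectrum (r N : ℕ) (hr : 1 ≤ r) (m : ℕ → ℕ) (p : ℕ → ℝ)
    (hN : 0 < N) (hm0 : m 0 = N) (hmpos : ∀ k ≤ r, 0 < m k)
    (hchain : ∀ k ∈ Finset.Icc 1 r, m k ∣ m (k - 1))
    (P : Matrix (Fin N) (Fin N) ℝ)
    (hP : ∀ i j : Fin N,
      P i j = (if i = j then 1 - p r else 0) +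
        (∑ k ∈ Finset.Icc 1 r,
          (p k - p (k - 1)) * (if (i : ℕ) / m k = (j : ℕ) / m k then 1 else 0)) + p 0) :
    P.charpoly =
      (X - C (1 - p r)) ^ (N - N / m r) *
        (∏ j ∈ Finset.Icc 1 r,
          (X - C ((1 - p r) + ∑ k ∈ Finset.Icc j r, (m k : ℝ) * (p k - p (k - 1)))) ^
            (N / m j - N / m (j - 1))) *
        (X - C ((1 - p r) + (∑ k ∈ Finset.Icc 1 r, (m k : ℝ) * (p k - p (k - 1))) +
          (N : ℝ) * p 0)) := by
  classical
  have hTS := TS_one hN hm0 hmpos hchain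
  have hST : Smat r N m * Tmat r N m = 1 := mul_eq_one_comm.mp hTS
  have hPS := PS_eq hN hm0 hmpos hchain P hP
  have hPdecomp : P = Smat r N m *
      Matrix.diagonal (fun i : Fin N => lamd r N m p (lev r m ↑i)) * Tmat r N m := by
    calc P = P * (Smat r N m * Tmat r N m) := by rw [hST, Matrix.mul_one]
      _ = (P * Smat r N m) * Tmat r N m := by rw [Matrix.mul_assoc]
      _ = _ := by rw [hPS]
  rw [hPdecomp, charpoly_conj _ _ _ hST, charpoly_diag]
  -- group the product by the level map
  have hmaps : ∀ i ∈ (Finset.univ : Finset (Fin N)), lev r m ↑i ∈ Finset.range (r + 2) :=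
    fun i _ => Finset.mem_range.mpr (by have := lev_le r m (↑i : ℕ); omega)
  rw [← Finset.prod_fiberwise_of_maps_to hmaps
    (fun i : Fin N => X - C (lamd r N m p (lev r m ↑i)))]
  have hstep : ∀ j ∈ Finset.range (r + 2),
      (∏ i ∈ Finset.univ.filter fun i : Fin N => lev r m ↑i = j,
        (X - C (lamd r N m p (lev r m ↑i))))
      = (X - C (lamd r N m p j)) ^
          ((Finset.univ.filter fun i : Fin N => lev r m ↑i = j).card) := by
    intro j _
    rw [Finset.prod_congr rfl (fun i hi => by
      rw [(Finset.mem_filter.mp hi).2]), Finset.prod_const]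
  rw [Finset.prod_congr rfl hstep]
  have hrange : Finset.range (r + 2) = insert 0 (insert (r + 1) (Finset.Icc 1 r)) := by
    ext x
    simp only [Finset.mem_range, Finset.mem_insert, Finset.mem_Icc]
    omega
  have h0notin : (0 : ℕ) ∉ insert (r + 1) (Finset.Icc 1 r) := by
    simp only [Finset.mem_insert, Finset.mem_Icc]
    omega
  have hr1notin : r + 1 ∉ Finset.Icc 1 r := by
    simp only [Finset.mem_Icc]
    omega
  rw [hrange, Finset.prod_insert h0notin, Finset.prod_insert hr1notin]
  -- the three pieces
  have hc0 : ((Finset.univ.filter fun i : Fin N => lev r m ↑i = 0)).card = 1 :=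
    card_lev_fiber0 hN hm0
  have hl0 : lamd r N m p 0 = (1 - p r) +
      (∑ k ∈ Finset.Icc 1 r, (m k : ℝ) * (p k - p (k - 1))) + (N : ℝ) * p 0 := by
    unfold lamd
    norm_num
  have hctop : ((Finset.univ.filter fun i : Fin N => lev r m ↑i = r + 1)).card
      = N - N / m r := by
    rw [card_lev_fiber hm0 hmpos hchain (by omega)]
    have h1 : Mex r m (r + 1) = 1 := Mex_top r m
    have h2 : Mex r m (r + 1 - 1) = m r := by
      have : r + 1 - 1 = r := by omega
      rw [this, Mex_eq_m le_rfl]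
    rw [h1, h2, Nat.div_one]
  have hltop : lamd r N m p (r + 1) = 1 - p r := by
    unfold lamd
    have h1 : max 1 (r + 1) = r + 1 := by omega
    have h2 : Finset.Icc (r + 1) r = ∅ := Finset.Icc_eq_empty (by omega)
    rw [h1, h2, Finset.sum_empty, if_neg (by omega)]
    ring
  have hmid : ∀ j ∈ Finset.Icc 1 r,
      (X - C (lamd r N m p j)) ^
          ((Finset.univ.filter fun i : Fin N => lev r m ↑i = j).card)
        = (X - C ((1 - p r) + ∑ k ∈ Finset.Icc j r, (m k : ℝ) * (p k - p (k - 1)))) ^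
            (N / m j - N / m (j - 1)) := by
    intro j hj
    rw [Finset.mem_Icc] at hj
    have hcj : ((Finset.univ.filter fun i : Fin N => lev r m ↑i = j)).card
        = N / m j - N / m (j - 1) := by
      rw [card_lev_fiber hm0 hmpos hchain hj.1, Mex_eq_m hj.2, Mex_eq_m (by omega)]
    have hlj : lamd r N m p j
        = (1 - p r) + ∑ k ∈ Finset.Icc j r, (m k : ℝ) * (p k - p (k - 1)) := by
      unfold lamd
      have h1 : max 1 j = j := by omega
      rw [h1, if_neg (by omega)]
      ring
    rw [hcj, hlj]
  rw [hc0, hl0, hctop, hltop, pow_one, Finset.prod_congr rfl hmid]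
  ring
end

section
/- Let 𝒴 ⊂ ℝ^m be a finite nonempty set, let c ∈ ℝ, w ∈ ℝ^m, and let m₁, m₂ be positive integers with m₂ dividing m₁. Let z be a standard Gaussian random vector in ℝ^m. For a tuple (y₁,…,y_{m₁}) ∈ 𝒴^{m₁} and 1 ≤ i ≤ m₁/m₂, write S_i = Σ_{j=(i−1)m₂+1}^{i·m₂} y_j and S = Σ_{j=1}^{m₁} y_j. Then Σ_{(y₁,…,y_{m₁}) ∈ 𝒴^{m₁}} exp((c²/2)·Σ_{i=1}^{m₁/m₂} ‖S_i‖₂² + Sᵀw) = (E_z[(Σ_{y ∈ 𝒴} exp(yᵀ(c·z + w)))^{m₂}])^{m₁/m₂}. -/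
open MeasureTheory ProbabilityTheory Finset

open scoped NNReal ENNReal

section HSAux

open Real


lemma HS.density_eq :
    gaussianReal 0 1 = MeasureTheory.volume.withDensity
      fun x => ((((Real.sqrt (2 * π))⁻¹ * Real.exp (-x ^ 2 / 2)).toNNReal : ℝ≥0) : ℝ≥0∞) := by
  rw [gaussianReal_of_var_ne_zero 0 one_ne_zero]
  congr 1
  funext x
  rw [gaussianPDF]
  have h : gaussianPDFReal 0 1 x = (Real.sqrt (2 * π))⁻¹ * Real.exp (-x ^ 2 / 2) := by
    simp only [gaussianPDFReal, NNReal.coe_one, mul_one, sub_zero]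
  rw [h, ENNReal.ofReal]

lemma HS.meas : Measurable fun x : ℝ =>
    (((Real.sqrt (2 * π))⁻¹ * Real.exp (-x ^ 2 / 2)).toNNReal : ℝ≥0) := by
  measurability

lemma HS.integrable_exp_affine (q r : ℝ) :
    Integrable (fun x => Real.exp (q * x + r)) (gaussianReal 0 1) := by
  rw [HS.density_eq, integrable_withDensity_iff HS.meas.coe_nnreal_ennreal
    (ae_of_all _ fun x => ENNReal.coe_lt_top)]
  have h : (fun x : ℝ => Real.exp (q * x + r) *
      ((((((Real.sqrt (2 * π))⁻¹ * Real.exp (-x ^ 2 / 2)).toNNReal : ℝ≥0)) : ℝ≥0∞)).toReal)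
      = fun x => ((Real.sqrt (2 * π))⁻¹ * Real.exp (q ^ 2 / 2 + r)) *
        Real.exp (-(1/2) * (x - q) ^ 2) := by
    funext x
    rw [ENNReal.coe_toReal, Real.coe_toNNReal _ (by positivity)]
    rw [mul_left_comm, ← Real.exp_add, mul_assoc, ← Real.exp_add]
    congr 2
    ring
  rw [h]
  refine Integrable.const_mul ?_ _
  exact ((measurePreserving_sub_right volume q).integrable_comp
    (by measurability)).mpr (integrable_exp_neg_mul_sq (by norm_num : (0:ℝ) < 1/2))

lemma HS.integral_exp_mul (q : ℝ) :
    ∫ x, Real.exp (q * x) ∂(gaussianReal 0 1) = Real.exp (q ^ 2 / 2) := by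
  rw [HS.density_eq, integral_withDensity_eq_integral_smul HS.meas]
  have h : (fun x : ℝ => (((Real.sqrt (2 * π))⁻¹ * Real.exp (-x ^ 2 / 2)).toNNReal : ℝ≥0)
        • Real.exp (q * x))
      = fun x => ((Real.sqrt (2 * π))⁻¹ * Real.exp (q ^ 2 / 2)) *
        Real.exp (-(1/2) * (x - q) ^ 2) := by
    funext x
    rw [NNReal.smul_def, smul_eq_mul, Real.coe_toNNReal _ (by positivity)]
    rw [mul_assoc, ← Real.exp_add, mul_assoc, ← Real.exp_add]
    congr 2
    ring
  rw [h, integral_const_mul]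
  have h2 : ∫ x : ℝ, Real.exp (-(1/2) * (x - q) ^ 2)
      = ∫ x : ℝ, Real.exp (-(1/2) * x ^ 2) :=
    integral_sub_right_eq_self (fun x => Real.exp (-(1/2) * x ^ 2)) q
  rw [h2, integral_gaussian]
  have h3 : Real.sqrt (π / (1/2)) = Real.sqrt (2 * π) := by norm_num; ring_nf
  rw [h3]
  have h4 : Real.sqrt (2 * π) ≠ 0 := by positivity
  field_simp

lemma HS.integrable_pi {m : ℕ} (c : ℝ) (w S : Fin m → ℝ) :
    Integrable (fun z : Fin m → ℝ => Real.exp (∑ a, S a * (c * z a + w a)))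
      (Measure.pi fun _ : Fin m => gaussianReal 0 1) := by
  letI : MeasureSpace ℝ := ⟨gaussianReal 0 1⟩
  haveI : SigmaFinite (volume : Measure ℝ) := inferInstanceAs (SigmaFinite (gaussianReal 0 1))
  have h : (fun z : Fin m → ℝ => Real.exp (∑ a, S a * (c * z a + w a)))
      = fun z => ∏ a, Real.exp ((S a * c) * z a + S a * w a) := by
    funext z
    rw [← Real.exp_sum]
    congr 1
    exact Finset.sum_congr rfl fun a _ => by ring
  rw [h]
  exact Integrable.fintype_prod fun a => HS.integrable_exp_affine _ _

lemma HS.integral_pi {m : ℕ} (c : ℝ) (w S : Fin m → ℝ) :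
    ∫ z : Fin m → ℝ, Real.exp (∑ a, S a * (c * z a + w a))
      ∂(Measure.pi fun _ : Fin m => gaussianReal 0 1)
    = Real.exp (c ^ 2 / 2 * ∑ a, S a ^ 2 + ∑ a, S a * w a) := by
  letI : MeasureSpace ℝ := ⟨gaussianReal 0 1⟩
  haveI : SigmaFinite (volume : Measure ℝ) := inferInstanceAs (SigmaFinite (gaussianReal 0 1))
  have h : (fun z : Fin m → ℝ => Real.exp (∑ a, S a * (c * z a + w a)))
      = fun z => ∏ a, (Real.exp (S a * w a) * Real.exp ((S a * c) * z a)) := by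
    funext z
    simp only [← Real.exp_add]
    rw [← Real.exp_sum]
    congr 1
    exact Finset.sum_congr rfl fun a _ => by ring
  have key : ∫ z : Fin m → ℝ, Real.exp (∑ a, S a * (c * z a + w a))
      ∂(Measure.pi fun _ : Fin m => gaussianReal 0 1)
      = ∏ a, ∫ x : ℝ, Real.exp (S a * w a) * Real.exp ((S a * c) * x) ∂(gaussianReal 0 1) := by
    rw [h]
    exact integral_fintype_prod_eq_prod (ι := Fin m)
      (fun a x => Real.exp (S a * w a) * Real.exp ((S a * c) * x))
  rw [key]
  have h2 : ∀ a : Fin m, (∫ x : ℝ, Real.exp (S a * w a) * Real.exp ((S a * c) * x)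
        ∂(gaussianReal 0 1))
      = Real.exp (c ^ 2 / 2 * S a ^ 2 + S a * w a) := by
    intro a
    rw [integral_const_mul, HS.integral_exp_mul, ← Real.exp_add]
    congr 1; ring
  rw [Finset.prod_congr rfl fun a _ => h2 a, ← Real.exp_sum, Finset.sum_add_distrib,
    ← Finset.mul_sum]

lemma HS.emb_lt {m₁ m₂ k : ℕ} (hk : m₂ * k = m₁) (i : Fin k) (j : Fin m₂) :
    (i : ℕ) * m₂ + (j : ℕ) < m₁ := by
  have h1 : (i : ℕ) + 1 ≤ k := i.2
  have h2 : ((i : ℕ) + 1) * m₂ ≤ k * m₂ := Nat.mul_le_mul_right _ h1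
  have h3 : k * m₂ = m₁ := by rw [Nat.mul_comm]; exact hk
  have h4 : (j : ℕ) < m₂ := j.2
  have h5 : ((i : ℕ) + 1) * m₂ = (i : ℕ) * m₂ + m₂ := by ring
  omega

lemma HS.block_sum {m₁ m₂ k : ℕ} (hm₂ : 0 < m₂) (hk : m₂ * k = m₁) (i : Fin k)
    (f : Fin m₁ → ℝ) :
    ∑ j ∈ Finset.univ.filter (fun j : Fin m₁ => (j : ℕ) / m₂ = (i : ℕ)), f j
      = ∑ j : Fin m₂, f ⟨(i : ℕ) * m₂ + (j : ℕ), HS.emb_lt hk i j⟩ := by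
  refine Finset.sum_nbij' (fun j => (⟨(j : ℕ) % m₂, Nat.mod_lt _ hm₂⟩ : Fin m₂))
    (fun j => (⟨(i : ℕ) * m₂ + (j : ℕ), HS.emb_lt hk i j⟩ : Fin m₁)) ?_ ?_ ?_ ?_ ?_
  · intro a _; exact Finset.mem_univ _
  · intro b _
    simp only [Finset.mem_filter, Finset.mem_univ, true_and]
    have hb : (b : ℕ) < m₂ := b.2
    rw [Nat.add_comm, Nat.add_mul_div_right _ _ hm₂, Nat.div_eq_of_lt hb, Nat.zero_add]
  · intro a ha
    simp only [Finset.mem_filter, Finset.mem_univ, true_and] at ha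
    apply Fin.ext
    have h1 := Nat.div_add_mod (a : ℕ) m₂
    show (i : ℕ) * m₂ + (a : ℕ) % m₂ = (a : ℕ)
    rw [← ha, Nat.mul_comm ((a : ℕ) / m₂) m₂]
    exact h1
  · intro b _
    apply Fin.ext
    simp only []
    have hb : (b : ℕ) < m₂ := b.2
    rw [Nat.add_comm, Nat.add_mul_mod_self_right, Nat.mod_eq_of_lt hb]
  · intro a ha
    simp only [Finset.mem_filter, Finset.mem_univ, true_and] at ha
    congr 1
    apply Fin.ext
    have h1 := Nat.div_add_mod (a : ℕ) m₂
    show (a : ℕ) = (i : ℕ) * m₂ + (a : ℕ) % m₂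
    rw [← ha, Nat.mul_comm ((a : ℕ) / m₂) m₂]
    exact h1.symm

end HSAux

/-- **Two-level (block) Hubbard–Stratonovich decoupling identity.**
For a finite nonempty `𝒴 ⊂ ℝᵐ`, `c ∈ ℝ`, `w ∈ ℝᵐ`, and `m₂ ∣ m₁`, with
`S_i = Σ_{j in the i-th block of size m₂} y_j` and `S = Σ_{j=1}^{m₁} y_j`,
`Σ_{(y₁,…,y_{m₁}) ∈ 𝒴^{m₁}} exp((c²/2)·Σ_{i=1}^{m₁/m₂} ‖S_i‖₂² + Sᵀw)
  = (E_z[(Σ_{y ∈ 𝒴} exp(yᵀ(c z + w)))^{m₂}])^{m₁/m₂}`. -/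
theorem hubbard_stratonovich_two_level (m m₁ m₂ : ℕ) (hm₁ : 0 < m₁) (hm₂ : 0 < m₂)
    (hdvd : m₂ ∣ m₁) (𝒴 : Finset (Fin m → ℝ)) (h𝒴 : 𝒴.Nonempty) (c : ℝ) (w : Fin m → ℝ) :
    (∑ Y ∈ Fintype.piFinset (fun _ : Fin m₁ => 𝒴),
        Real.exp (c ^ 2 / 2 *
            (∑ i ∈ Finset.range (m₁ / m₂),
              ∑ a : Fin m,
                (∑ j ∈ Finset.univ.filter (fun j : Fin m₁ => (j : ℕ) / m₂ = i), Y j a) ^ 2) +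
          ∑ a : Fin m, (∑ j : Fin m₁, Y j a) * w a)) =
      (∫ z : Fin m → ℝ,
          (∑ y ∈ 𝒴, Real.exp (∑ a : Fin m, y a * (c * z a + w a))) ^ m₂
          ∂(Measure.pi fun _ : Fin m => gaussianReal 0 1)) ^ (m₁ / m₂) := by
  obtain ⟨k, hk⟩ : ∃ k, m₂ * k = m₁ := ⟨m₁ / m₂, Nat.mul_div_cancel' hdvd⟩
  have hkq : m₁ / m₂ = k := by rw [← hk, Nat.mul_div_cancel_left k hm₂]
  rw [hkq]
  have hdiv : ∀ jj : Fin m₁, (jj : ℕ) / m₂ < k := fun jj =>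
    (Nat.div_lt_iff_lt_mul hm₂).mpr (by rw [Nat.mul_comm k m₂, hk]; exact jj.2)
  have hRHS : (∫ z : Fin m → ℝ,
        (∑ y ∈ 𝒴, Real.exp (∑ a : Fin m, y a * (c * z a + w a))) ^ m₂
        ∂(Measure.pi fun _ : Fin m => gaussianReal 0 1))
      = ∑ p ∈ Fintype.piFinset (fun _ : Fin m₂ => 𝒴),
          Real.exp (c ^ 2 / 2 * ∑ a : Fin m, (∑ j, p j a) ^ 2
            + ∑ a : Fin m, (∑ j, p j a) * w a) := by
    have hpow : ∀ z : Fin m → ℝ,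
        (∑ y ∈ 𝒴, Real.exp (∑ a : Fin m, y a * (c * z a + w a))) ^ m₂
        = ∑ p ∈ Fintype.piFinset (fun _ : Fin m₂ => 𝒴),
            Real.exp (∑ a : Fin m, (∑ j, p j a) * (c * z a + w a)) := by
      intro z
      conv_lhs => rw [← Finset.card_fin m₂, ← Finset.prod_const]
      rw [Finset.prod_univ_sum]
      refine Finset.sum_congr rfl fun p _ => ?_
      rw [← Real.exp_sum]
      congr 1
      rw [Finset.sum_comm]
      exact Finset.sum_congr rfl fun a _ => (Finset.sum_mul _ _ _).symm
    simp only [hpow]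
    rw [integral_finset_sum _ (fun p _ => HS.integrable_pi c w (fun a => ∑ j, p j a))]
    exact Finset.sum_congr rfl fun p _ => HS.integral_pi c w _
  rw [hRHS]
  have hstep : (∑ p ∈ Fintype.piFinset (fun _ : Fin m₂ => 𝒴),
        Real.exp (c ^ 2 / 2 * ∑ a : Fin m, (∑ j, p j a) ^ 2
          + ∑ a : Fin m, (∑ j, p j a) * w a)) ^ k
      = ∑ P ∈ Fintype.piFinset (fun _ : Fin k => Fintype.piFinset (fun _ : Fin m₂ => 𝒴)),
          ∏ i : Fin k,
            Real.exp (c ^ 2 / 2 * ∑ a : Fin m, (∑ j, P i j a) ^ 2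
              + ∑ a : Fin m, (∑ j, P i j a) * w a) := by
    conv_lhs => rw [← Finset.card_fin k, ← Finset.prod_const]
    rw [Finset.prod_univ_sum]
  rw [hstep]
  refine Finset.sum_nbij'
    (fun Y => fun (i : Fin k) (j : Fin m₂) => Y ⟨(i:ℕ)*m₂+(j:ℕ), HS.emb_lt hk i j⟩)
    (fun P => fun (jj : Fin m₁) => P ⟨(jj:ℕ)/m₂, hdiv jj⟩ ⟨(jj:ℕ)%m₂, Nat.mod_lt _ hm₂⟩)
    ?_ ?_ ?_ ?_ ?_
  · intro Y hY
    rw [Fintype.mem_piFinset] at hY ⊢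
    intro i
    rw [Fintype.mem_piFinset]
    intro j
    exact hY _
  · intro P hP
    rw [Fintype.mem_piFinset] at hP ⊢
    intro jj
    have h2 := hP ⟨(jj:ℕ)/m₂, hdiv jj⟩
    rw [Fintype.mem_piFinset] at h2
    exact h2 _
  · intro Y _
    funext jj
    beta_reduce
    exact congrArg Y (Fin.ext (by
      show (jj:ℕ)/m₂ * m₂ + (jj:ℕ)%m₂ = (jj:ℕ)
      rw [Nat.mul_comm]
      exact Nat.div_add_mod _ _))
  · intro P _
    funext i j
    beta_reduce
    have e1 : (⟨((i:ℕ)*m₂+(j:ℕ))/m₂, hdiv ⟨(i:ℕ)*m₂+(j:ℕ), HS.emb_lt hk i j⟩⟩ : Fin k) = i := by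
      apply Fin.ext
      show ((i:ℕ)*m₂+(j:ℕ))/m₂ = (i:ℕ)
      rw [Nat.add_comm, Nat.add_mul_div_right _ _ hm₂, Nat.div_eq_of_lt j.2, Nat.zero_add]
    have e2 : (⟨((i:ℕ)*m₂+(j:ℕ))%m₂, Nat.mod_lt _ hm₂⟩ : Fin m₂) = j := by
      apply Fin.ext
      show ((i:ℕ)*m₂+(j:ℕ))%m₂ = (j:ℕ)
      rw [Nat.add_comm, Nat.add_mul_mod_self_right, Nat.mod_eq_of_lt j.2]
    rw [e1, e2]
  · intro Y _
    beta_reduce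
    rw [← Real.exp_sum]
    congr 1
    have hblock : ∀ (i : Fin k) (a : Fin m),
        (∑ j ∈ Finset.univ.filter (fun j : Fin m₁ => (j : ℕ) / m₂ = (i:ℕ)), Y j a)
        = ∑ j : Fin m₂, Y ⟨(i:ℕ)*m₂+(j:ℕ), HS.emb_lt hk i j⟩ a :=
      fun i a => HS.block_sum hm₂ hk i (fun j => Y j a)
    have htot : ∀ a : Fin m, (∑ jj : Fin m₁, Y jj a)
        = ∑ i : Fin k, ∑ j : Fin m₂, Y ⟨(i:ℕ)*m₂+(j:ℕ), HS.emb_lt hk i j⟩ a := by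
      intro a
      have h3 := Finset.sum_fiberwise_of_maps_to (s := (Finset.univ : Finset (Fin m₁)))
        (t := Finset.range k) (g := fun jj : Fin m₁ => (jj:ℕ)/m₂)
        (fun jj _ => Finset.mem_range.mpr (hdiv jj)) (fun jj => Y jj a)
      rw [← h3, ← Fin.sum_univ_eq_sum_range
          (fun i => ∑ jj ∈ Finset.univ.filter (fun jj : Fin m₁ => (jj:ℕ)/m₂ = i), Y jj a) k]
      exact Finset.sum_congr rfl fun i _ => hblock i a
    rw [Finset.sum_add_distrib, ← Finset.mul_sum]
    congr 1
    · congr 1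
      rw [← Fin.sum_univ_eq_sum_range
        (fun i => ∑ a : Fin m,
          (∑ j ∈ Finset.univ.filter (fun j : Fin m₁ => (j:ℕ)/m₂ = i), Y j a)^2) k]
      exact Finset.sum_congr rfl fun i _ => Finset.sum_congr rfl fun a _ => by rw [hblock i a]
    · simp only [htot, Finset.sum_mul]
      rw [Finset.sum_comm]
end

section
/- Let 𝒴 ⊂ ℝ^m be a finite nonempty set, let r ≥ 2, let m₁, …, m_r be positive integers with m_r | m_{r−1} | ⋯ | m₂ | m₁, let c₂, …, c_r ∈ ℝ and w ∈ ℝ^m. Let z₂, …, z_r be independent standard Gaussian random vectors in ℝ^m. For a tuple Y = (y₁,…,y_{m₁}) ∈ 𝒴^{m₁}, for 2 ≤ j ≤ r and 1 ≤ i ≤ m₁/m_j write S_{i,j}(Y) = Σ_{a=(i−1)m_j+1}^{i·m_j} y_a, and write S(Y) = Σ_{a=1}^{m₁} y_a. Then Σ_{Y ∈ 𝒴^{m₁}} exp(Σ_{j=2}^{r} (c_j²/2)·Σ_{i=1}^{m₁/m_j} ‖S_{i,j}(Y)‖₂² + S(Y)ᵀw) = (E_{z₂}[(E_{z₃}[⋯(E_{z_r}[(Σ_{y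 ∈ 𝒴} exp(yᵀ(c₂z₂ + c₃z₃ + ⋯ + c_r z_r + w)))^{m_r}])^{m_{r−1}/m_r}⋯])^{m₂/m₃}])^{m₁/m₂}. -/
open MeasureTheory ProbabilityTheory Finset

noncomputable section

/-- Nested Gaussian expectation–power structure. `nestedHS m 𝒴 w c e 0 v` is the base
partition sum `Σ_{y ∈ 𝒴} exp(yᵀ(v + w))`, and each further level `d + 1` integrates a fresh
standard Gaussian field `z` scaled by `c (d+1)` and raises the result to the power `e (d+1)`:
`nestedHS m 𝒴 w c e (d+1) v = E_z[(nestedHS m 𝒴 w c e d (v + c(d+1)·z))^(e (d+1))]`. -/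
def nestedHS (m : ℕ) (𝒴 : Finset (Fin m → ℝ)) (w : Fin m → ℝ) (c : ℕ → ℝ) (e : ℕ → ℕ) :
    ℕ → (Fin m → ℝ) → ℝ
  | 0, v => ∑ y ∈ 𝒴, Real.exp (∑ a : Fin m, y a * (v a + w a))
  | d + 1, v =>
      ∫ z : Fin m → ℝ,
        (nestedHS m 𝒴 w c e d (fun a => v a + c (d + 1) * z a)) ^ e (d + 1)
        ∂(Measure.pi fun _ : Fin m => gaussianReal 0 1)


lemma gaussPDF_eq (μ : ℝ) : gaussianPDF μ 1 = fun x => ((gaussianPDFReal μ 1 x).toNNReal : ENNReal) := by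
  funext x; simp [gaussianPDF, ENNReal.ofReal]

lemma gauss_complete_sq (t x : ℝ) :
    (gaussianPDFReal 0 1 x).toNNReal • Real.exp (t * x)
      = Real.exp (t ^ 2 / 2) * gaussianPDFReal t 1 x := by
  have h0 : 0 ≤ gaussianPDFReal 0 1 x := gaussianPDFReal_nonneg 0 1 x
  rw [NNReal.smul_def, Real.coe_toNNReal _ h0]
  simp only [gaussianPDFReal, NNReal.coe_one, mul_one]
  rw [smul_eq_mul]
  rw [show (√(2 * Real.pi))⁻¹ * Real.exp (-(x - 0) ^ 2 / 2) * Real.exp (t * x)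
      = (√(2 * Real.pi))⁻¹ * (Real.exp (-(x - 0) ^ 2 / 2) * Real.exp (t * x)) by ring,
    show Real.exp (t ^ 2 / 2) * ((√(2 * Real.pi))⁻¹ * Real.exp (-(x - t) ^ 2 / 2))
      = (√(2 * Real.pi))⁻¹ * (Real.exp (t ^ 2 / 2) * Real.exp (-(x - t) ^ 2 / 2)) by ring,
    ← Real.exp_add, ← Real.exp_add]
  congr 1
  ring

lemma gauss_mgf (t : ℝ) :
    ∫ x, Real.exp (t * x) ∂(gaussianReal 0 1) = Real.exp (t ^ 2 / 2) := by
  rw [gaussianReal_of_var_ne_zero 0 one_ne_zero, gaussPDF_eq,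
    integral_withDensity_eq_integral_smul ((measurable_gaussianPDFReal 0 1).real_toNNReal)]
  simp_rw [gauss_complete_sq t]
  rw [integral_const_mul, integral_gaussianPDFReal_eq_one t one_ne_zero, mul_one]

lemma gauss_integrable (t : ℝ) :
    Integrable (fun x => Real.exp (t * x)) (gaussianReal 0 1) := by
  rw [gaussianReal_of_var_ne_zero 0 one_ne_zero, gaussPDF_eq,
    integrable_withDensity_iff_integrable_smul ((measurable_gaussianPDFReal 0 1).real_toNNReal)]
  simp_rw [gauss_complete_sq t]
  exact (integrable_gaussianPDFReal t 1).const_mul _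


lemma pi_mgf (m : ℕ) (t : Fin m → ℝ) :
    ∫ z : Fin m → ℝ, Real.exp (∑ a, t a * z a) ∂(Measure.pi fun _ => gaussianReal 0 1)
      = Real.exp (∑ a, t a ^ 2 / 2) := by
  letI : MeasureSpace ℝ := ⟨gaussianReal 0 1⟩
  haveI : SigmaFinite (volume : Measure ℝ) := inferInstanceAs (SigmaFinite (gaussianReal 0 1))
  have hv : (Measure.pi fun _ : Fin m => gaussianReal 0 1) = (volume : Measure (Fin m → ℝ)) := rfl
  rw [hv]
  simp_rw [Real.exp_sum]
  rw [← hv, MeasureTheory.integral_fintype_prod_eq_prod (fun a x => Real.exp (t a * x))]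
  exact Finset.prod_congr rfl fun a _ => gauss_mgf (t a)

lemma pi_integrable (m : ℕ) (t : Fin m → ℝ) :
    Integrable (fun z : Fin m → ℝ => Real.exp (∑ a, t a * z a))
      (Measure.pi fun _ => gaussianReal 0 1) := by
  letI : MeasureSpace ℝ := ⟨gaussianReal 0 1⟩
  haveI : SigmaFinite (volume : Measure ℝ) := inferInstanceAs (SigmaFinite (gaussianReal 0 1))
  have hv : (Measure.pi fun _ : Fin m => gaussianReal 0 1) = (volume : Measure (Fin m → ℝ)) := rfl
  rw [hv]
  simp_rw [Real.exp_sum]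
  exact MeasureTheory.Integrable.fintype_prod (f := fun a x => Real.exp (t a * x))
    fun a => gauss_integrable (t a)


/-- block sum: sum of `Y` over indices `jj` with `jj / B = i`. -/
def bsum (M B : ℕ) (Y : Fin M → ℝ) (i : ℕ) : ℝ :=
  ∑ jj ∈ Finset.univ.filter (fun jj : Fin M => (jj : ℕ) / B = i), Y jj

/-- the `i`-th block of length `N` of `Z : Fin (n*N) → α`. -/
def blk {α : Type*} [Zero α] (n N : ℕ) (Z : Fin (n * N) → α) (i : ℕ) : Fin N → α :=
  fun k => if h : (k : ℕ) + i * N < n * N then Z ⟨(k : ℕ) + i * N, h⟩ else 0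

lemma blk_lt {n N i : ℕ} (hi : i < n) (k : Fin N) : (k : ℕ) + i * N < n * N := by
  calc (k : ℕ) + i * N < N + i * N := by omega
  _ = (i + 1) * N := by ring
  _ ≤ n * N := Nat.mul_le_mul_right _ (by omega)

lemma blk_of_lt {α : Type*} [Zero α] {n N i : ℕ} (hi : i < n) (Z : Fin (n * N) → α) (k : Fin N) :
    blk n N Z i k = Z ⟨(k : ℕ) + i * N, blk_lt hi k⟩ := by
  rw [blk, dif_pos]

lemma blk_coord {m n N i : ℕ} (Z : Fin (n * N) → Fin m → ℝ) (a : Fin m) :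
    (fun k => blk n N Z i k a) = blk n N (fun jj => Z jj a) i := by
  funext k
  by_cases h : (k : ℕ) + i * N < n * N
  · simp only [blk, dif_pos h]
  · simp only [blk, dif_neg h, Pi.zero_apply]

/-- (F3) split a sum over `range (n * q)` into blocks. -/
lemma sum_range_mul {M : Type*} [AddCommMonoid M] (n q : ℕ) (f : ℕ → M) :
    ∑ p ∈ Finset.range (n * q), f p = ∑ i ∈ Finset.range n, ∑ t ∈ Finset.range q, f (t + i * q) := by
  induction n with
  | zero => simp
  | succ n ih =>
    rw [Nat.succ_mul, Finset.sum_range_add, ih, Finset.sum_range_succ]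
    congr 1
    exact Finset.sum_congr rfl fun t _ => by rw [add_comm (n * q) t]

/-- (F2) a level-`B` block sum inside `Fin (n*N)` is a block sum of the corresponding
`N`-block. -/
lemma bsum_blk {n N B : ℕ} (hB : 0 < B) (hBN : B ∣ N) (Z : Fin (n * N) → ℝ)
    {i t : ℕ} (hi : i < n) (ht : t < N / B) :
    bsum (n * N) B Z (t + i * (N / B)) = bsum N B (blk n N Z i) t := by
  set q := N / B with hq
  have hNq : N = B * q := by rw [hq, Nat.mul_div_cancel' hBN]
  have hqpos : 0 < q := lt_of_le_of_lt (Nat.zero_le t) ht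
  have hN : 0 < N := hNq ▸ Nat.mul_pos hB hqpos
  have key1 : ∀ x : ℕ, x % N / B = x / B % q := by
    intro x; rw [hNq]; exact Nat.mod_mul_right_div_self _ _ _
  have key2 : ∀ x : ℕ, x / N = x / B / q := by
    intro x; rw [hNq, Nat.div_div_eq_div_mul]
  rw [bsum, bsum]
  refine Finset.sum_bij' (i := fun jj _ => (⟨(jj : ℕ) % N, Nat.mod_lt _ hN⟩ : Fin N))
    (j := fun k _ => (⟨(k : ℕ) + i * N, blk_lt hi k⟩ : Fin (n * N))) ?_ ?_ ?_ ?_ ?_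
  · intro jj hjj
    simp only [Finset.mem_filter, Finset.mem_univ, true_and] at hjj ⊢
    rw [key1, hjj, Nat.add_mul_mod_self_right, Nat.mod_eq_of_lt ht]
  · intro k hk
    simp only [Finset.mem_filter, Finset.mem_univ, true_and] at hk ⊢
    have h2 : i * N = (i * q) * B := by rw [hNq]; ring
    rw [h2, Nat.add_mul_div_right _ _ hB, hk]
  · intro jj hjj
    simp only [Finset.mem_filter, Finset.mem_univ, true_and] at hjj
    apply Fin.ext
    have hdiv : (jj : ℕ) / N = i := by
      rw [key2, hjj, Nat.add_mul_div_right _ _ hqpos, Nat.div_eq_of_lt ht, zero_add]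
    simp only
    calc (jj : ℕ) % N + i * N = (jj : ℕ) % N + (jj : ℕ) / N * N := by rw [hdiv]
    _ = (jj : ℕ) := Nat.mod_add_div' _ _
  · intro k hk
    apply Fin.ext
    simp only
    rw [Nat.add_mul_mod_self_right, Nat.mod_eq_of_lt k.2]
  · intro jj hjj
    simp only [Finset.mem_filter, Finset.mem_univ, true_and] at hjj
    rw [blk_of_lt hi]
    congr 1
    apply Fin.ext
    simp only
    have hdiv : (jj : ℕ) / N = i := by
      rw [key2, hjj, Nat.add_mul_div_right _ _ hqpos, Nat.div_eq_of_lt ht, zero_add]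
    calc (jj : ℕ) = (jj : ℕ) % N + (jj : ℕ) / N * N := (Nat.mod_add_div' _ _).symm
    _ = (jj : ℕ) % N + i * N := by rw [hdiv]

lemma bsum_self {N : ℕ} (hN : 0 < N) (Y : Fin N → ℝ) : bsum N N Y 0 = ∑ kk, Y kk := by
  rw [bsum]
  apply Finset.sum_congr _ (fun _ _ => rfl)
  rw [Finset.filter_true_of_mem]
  intro k _
  exact Nat.div_eq_of_lt k.2

/-- (F1) total sum over `Fin (n*N)` as a sum of block sums. -/
lemma sum_eq_sum_bsum {n N : ℕ} (hN : 0 < N) (Z : Fin (n * N) → ℝ) :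
    ∑ jj, Z jj = ∑ i ∈ Finset.range n, bsum (n * N) N Z i := by
  rw [eq_comm]
  simp only [bsum]
  apply Finset.sum_fiberwise_of_maps_to
  intro jj _
  rw [Finset.mem_range]
  exact Nat.div_lt_of_lt_mul (lt_of_lt_of_eq jj.2 (mul_comm n N))

lemma sum_blk_eq {n N : ℕ} (hN : 0 < N) (Z : Fin (n * N) → ℝ) {i : ℕ} (hi : i < n) :
    ∑ kk, blk n N Z i kk = bsum (n * N) N Z i := by
  have h1 : N / N = 1 := Nat.div_self hN
  have : bsum (n * N) N Z i = bsum (n * N) N Z (0 + i * (N / N)) := by rw [h1]; ring_nf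
  rw [this, bsum_blk hN dvd_rfl Z hi (by omega), bsum_self hN]

/-- regroup a power of a sum over tuples of length `N` as a sum over tuples of length `n*N`. -/
lemma pow_regroup {m : ℕ} (𝒴 : Finset (Fin m → ℝ)) (n N : ℕ)
    (G : (Fin N → Fin m → ℝ) → ℝ) :
    (∑ Y ∈ Fintype.piFinset (fun _ : Fin N => 𝒴), G Y) ^ n
      = ∑ Z ∈ Fintype.piFinset (fun _ : Fin (n * N) => 𝒴),
          ∏ i ∈ Finset.range n, G (blk n N Z i) := by
  rw [Finset.sum_pow']
  refine Finset.sum_bij' (i := fun W _ => fun jj : Fin (n * N) =>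
      W ⟨(jj : ℕ) / N, ?_⟩ ⟨(jj : ℕ) % N, ?_⟩)
    (j := fun Z _ => fun i : Fin n => blk n N Z (i : ℕ)) ?_ ?_ ?_ ?_ ?_
  · exact Nat.div_lt_of_lt_mul (lt_of_lt_of_eq jj.2 (mul_comm n N))
  · refine Nat.mod_lt _ ?_
    rcases Nat.eq_zero_or_pos N with h | h
    · exact absurd jj.2 (by simp [h])
    · exact h
  · intro W hW
    simp only [Fintype.mem_piFinset] at hW ⊢
    intro jj
    exact hW _ _
  · intro Z hZ
    simp only [Fintype.mem_piFinset] at hZ ⊢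
    intro i k
    rw [blk_of_lt i.2]
    exact hZ _
  · intro W hW
    funext i k
    rw [blk_of_lt i.2]
    simp only
    have hNpos : 0 < N := lt_of_le_of_lt (Nat.zero_le _) k.2
    have e1 : ((k : ℕ) + (i : ℕ) * N) / N = (i : ℕ) := by
      rw [Nat.add_mul_div_right _ _ hNpos, Nat.div_eq_of_lt k.2, zero_add]
    have e2 : ((k : ℕ) + (i : ℕ) * N) % N = (k : ℕ) := by
      rw [Nat.add_mul_mod_self_right, Nat.mod_eq_of_lt k.2]
    simp only [e1, e2, Fin.eta]
  · intro Z hZ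
    funext jj
    simp only
    rw [blk_of_lt (Nat.div_lt_of_lt_mul (lt_of_lt_of_eq jj.2 (mul_comm n N)))]
    exact congrArg Z (Fin.ext (by simp [Nat.mod_add_div']))
  · intro W hW
    rw [← Fin.prod_univ_eq_prod_range]
    refine Finset.prod_congr rfl fun i _ => ?_
    congr 1
    funext k
    rw [blk_of_lt i.2]
    simp only
    have hNpos : 0 < N := lt_of_le_of_lt (Nat.zero_le _) k.2
    have e1 : ((k : ℕ) + (i : ℕ) * N) / N = (i : ℕ) := by
      rw [Nat.add_mul_div_right _ _ hNpos, Nat.div_eq_of_lt k.2, zero_add]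
    have e2 : ((k : ℕ) + (i : ℕ) * N) % N = (k : ℕ) := by
      rw [Nat.add_mul_mod_self_right, Nat.mod_eq_of_lt k.2]
    simp only [e1, e2, Fin.eta]

lemma exponent_split {m : ℕ} (n N : ℕ) (hN : 0 < N) (Ks : Finset ℕ) (B : ℕ → ℕ) (γ : ℕ → ℝ)
    (hB : ∀ k ∈ Ks, 0 < B k ∧ B k ∣ N) (Z : Fin (n * N) → Fin m → ℝ) (u : Fin m → ℝ) :
    (∑ k ∈ Ks, γ k * ∑ p ∈ Finset.range (n * (N / B k)), ∑ a : Fin m,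
        (bsum (n * N) (B k) (fun jj => Z jj a) p) ^ 2)
      + ∑ a : Fin m, (∑ jj, Z jj a) * u a
    = ∑ i ∈ Finset.range n,
        ((∑ k ∈ Ks, γ k * ∑ t ∈ Finset.range (N / B k), ∑ a : Fin m,
            (bsum N (B k) (fun kk => blk n N Z i kk a) t) ^ 2)
          + ∑ a : Fin m, (∑ kk, blk n N Z i kk a) * u a) := by
  rw [Finset.sum_add_distrib]
  congr 1
  · -- quadratic part
    rw [Finset.sum_comm]
    refine Finset.sum_congr rfl fun k hk => ?_
    obtain ⟨hBpos, hBdvd⟩ := hB k hk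
    rw [← Finset.mul_sum]
    congr 1
    rw [sum_range_mul n (N / B k)]
    refine Finset.sum_congr rfl fun i hi => Finset.sum_congr rfl fun t ht => ?_
    refine Finset.sum_congr rfl fun a _ => ?_
    rw [blk_coord, bsum_blk hBpos hBdvd _ (Finset.mem_range.mp hi) (Finset.mem_range.mp ht)]
  · -- linear part
    rw [Finset.sum_comm]
    refine Finset.sum_congr rfl fun a _ => ?_
    rw [← Finset.sum_mul]
    congr 1
    rw [show (fun jj => Z jj a) = (fun jj => (fun jj' => Z jj' a) jj) from rfl]
    rw [sum_eq_sum_bsum hN (fun jj => Z jj a)]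
    refine Finset.sum_congr rfl fun i hi => ?_
    rw [show (∑ kk, blk n N Z i kk a) = ∑ kk, blk n N (fun jj => Z jj a) i kk by
      rw [← blk_coord], sum_blk_eq hN _ (Finset.mem_range.mp hi)]

def Nn (e : ℕ → ℕ) : ℕ → ℕ
  | 0 => 1
  | d + 1 => e (d + 1) * Nn e d

lemma Nn_pos {e : ℕ → ℕ} {d : ℕ} (he : ∀ k, 1 ≤ k → k ≤ d → 0 < e k) : 0 < Nn e d := by
  induction d with
  | zero => exact Nat.one_pos
  | succ d ih =>
    rw [Nn]
    exact Nat.mul_pos (he (d+1) (by omega) le_rfl) (ih fun k h1 h2 => he k h1 (by omega))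

lemma Nn_dvd {e : ℕ → ℕ} {k d : ℕ} (h : k ≤ d) : Nn e k ∣ Nn e d := by
  induction d with
  | zero => rw [Nat.le_zero.mp h]
  | succ d ih =>
    rcases Nat.lt_or_ge k (d+1) with h' | h'
    · exact (ih (by omega)).mul_left _
    · rw [show k = d + 1 by omega]

lemma key (m : ℕ) (𝒴 : Finset (Fin m → ℝ)) (w : Fin m → ℝ) (c : ℕ → ℝ) (e : ℕ → ℕ) (d : ℕ)
    (he : ∀ k, 1 ≤ k → k ≤ d → 0 < e k) (v : Fin m → ℝ) :
    nestedHS m 𝒴 w c e d v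
      = ∑ Y ∈ Fintype.piFinset (fun _ : Fin (Nn e d) => 𝒴),
          Real.exp
            ((∑ k ∈ Finset.Icc 1 d, c k ^ 2 / 2 *
                ∑ p ∈ Finset.range (Nn e d / Nn e k), ∑ a : Fin m,
                  (bsum (Nn e d) (Nn e k) (fun jj => Y jj a) p) ^ 2)
              + ∑ a : Fin m, (∑ jj, Y jj a) * (v a + w a)) := by
  induction d generalizing v with
  | zero =>
    rw [nestedHS]
    simp only [Finset.Icc_self, Finset.Icc_eq_empty_of_lt Nat.zero_lt_one, Finset.sum_empty,
      zero_add]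
    refine Finset.sum_nbij' (fun y => fun _ : Fin (Nn e 0) => y) (fun Y => Y ⟨0, Nat.one_pos⟩) ?_ ?_ ?_ ?_ ?_
    · intro y hy; simp [Fintype.mem_piFinset, hy]
    · intro Y hY; exact (Fintype.mem_piFinset.mp hY) _
    · intro y _; rfl
    · intro Y _
      funext i
      exact congrArg Y (Fin.ext (by show 0 = (i : ℕ); have := i.2; simp only [Nn] at this; omega))
    · intro y _
      refine congrArg Real.exp (Finset.sum_congr rfl fun a _ => ?_)
      congr 1
      rw [Finset.sum_const, Finset.card_univ, Fintype.card_fin,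
        show Nn e 0 = 1 from rfl, one_smul]
  | succ d ih =>
    have hN : 0 < Nn e d := Nn_pos (fun k h1 h2 => he k h1 (by omega))
    have hBk : ∀ k ∈ Finset.Icc 1 d, 0 < Nn e k ∧ Nn e k ∣ Nn e d := by
      intro k hk
      obtain ⟨h1, h2⟩ := Finset.mem_Icc.mp hk
      exact ⟨Nn_pos (fun k' hk1 hk2 => he k' hk1 (by omega)), Nn_dvd h2⟩
    have hn : 0 < e (d + 1) := he (d + 1) (by omega) le_rfl
    rw [nestedHS]
    have hexp : ∀ z : Fin m → ℝ,
        (nestedHS m 𝒴 w c e d (fun a => v a + c (d + 1) * z a)) ^ e (d + 1)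
          = ∑ Z ∈ Fintype.piFinset (fun _ : Fin (e (d + 1) * Nn e d) => 𝒴),
              Real.exp ((∑ k ∈ Finset.Icc 1 d, c k ^ 2 / 2 *
                  ∑ p ∈ Finset.range (e (d + 1) * (Nn e d / Nn e k)), ∑ a : Fin m,
                    (bsum (e (d + 1) * Nn e d) (Nn e k) (fun jj => Z jj a) p) ^ 2)
                + ∑ a : Fin m, (∑ jj, Z jj a) * (v a + w a))
              * Real.exp (∑ a : Fin m, (c (d + 1) * ∑ jj, Z jj a) * z a) := by
      intro z
      rw [ih (fun k h1 h2 => he k h1 (by omega)) (fun a => v a + c (d + 1) * z a),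
        pow_regroup 𝒴 (e (d + 1)) (Nn e d)]
      refine Finset.sum_congr rfl fun Z hZ => ?_
      rw [← Real.exp_sum, ← Real.exp_add]
      congr 1
      have hsplit := exponent_split (m := m) (e (d + 1)) (Nn e d) hN (Finset.Icc 1 d) (Nn e)
        (fun k => c k ^ 2 / 2) hBk Z (fun a => v a + c (d + 1) * z a + w a)
      rw [← hsplit, add_assoc]
      congr 1
      rw [← Finset.sum_add_distrib]
      exact Finset.sum_congr rfl fun a _ => by ring
    simp only [hexp]
    rw [MeasureTheory.integral_finset_sum _ (fun Z _ =>
      ((pi_integrable m (fun a => c (d + 1) * ∑ jj, Z jj a)).const_mul _))]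
    refine Finset.sum_congr rfl fun Z hZ => ?_
    rw [MeasureTheory.integral_const_mul, pi_mgf, ← Real.exp_add]
    congr 1
    simp only [Nn]
    rw [Finset.sum_Icc_succ_top (by omega : 1 ≤ d + 1)]
    simp only [Nn]
    have htop : c (d + 1) ^ 2 / 2 *
        ∑ p ∈ Finset.range (e (d + 1) * Nn e d / (e (d + 1) * Nn e d)), ∑ a : Fin m,
          (bsum (e (d + 1) * Nn e d) (e (d + 1) * Nn e d) (fun jj => Z jj a) p) ^ 2
        = ∑ a : Fin m, (c (d + 1) * ∑ jj, Z jj a) ^ 2 / 2 := by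
      rw [Nat.div_self (Nat.mul_pos hn hN), Finset.sum_range_one, Finset.mul_sum]
      refine Finset.sum_congr rfl fun a _ => ?_
      rw [bsum_self (Nat.mul_pos hn hN)]
      ring
    rw [htop]
    have hdiv : ∀ k ∈ Finset.Icc 1 d,
        c k ^ 2 / 2 * ∑ p ∈ Finset.range (e (d + 1) * Nn e d / Nn e k), ∑ a : Fin m,
          (bsum (e (d + 1) * Nn e d) (Nn e k) (fun jj => Z jj a) p) ^ 2
        = c k ^ 2 / 2 * ∑ p ∈ Finset.range (e (d + 1) * (Nn e d / Nn e k)), ∑ a : Fin m,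
          (bsum (e (d + 1) * Nn e d) (Nn e k) (fun jj => Z jj a) p) ^ 2 := by
      intro k hk
      rw [Nat.mul_div_assoc _ (hBk k hk).2]
    rw [Finset.sum_congr rfl hdiv]
    exact add_right_comm _ _ _

/-- **Nested (hierarchical) Hubbard–Stratonovich decoupling identity** underlying the `r`-th
level of the Parisi ansatz.  For `m_r ∣ m_{r−1} ∣ ⋯ ∣ m₂ ∣ m₁`, with block sums
`S_{i,j}(Y) = Σ_{a in the i-th block of size m_j} y_a` and `S(Y) = Σ_{a=1}^{m₁} y_a`,
`Σ_{Y ∈ 𝒴^{m₁}} exp(Σ_{j=2}^{r} (c_j²/2)·Σ_{i=1}^{m₁/m_j} ‖S_{i,j}(Y)‖₂² + S(Y)ᵀw)`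
equals the nested quantity
`(E_{z₂}[(E_{z₃}[⋯(E_{z_r}[(Σ_{y∈𝒴} exp(yᵀ(c₂z₂+⋯+c_r z_r + w)))^{m_r}])^{m_{r−1}/m_r}⋯])^{m₂/m₃}])^{m₁/m₂}`,
where level `d` of `nestedHS` corresponds to replica level `j = r + 1 − d`. -/
theorem hubbard_stratonovich_nested (m r : ℕ) (hr : 2 ≤ r)
    (mseq : ℕ → ℕ) (hmpos : ∀ j, 1 ≤ j → j ≤ r → 0 < mseq j)
    (hchain : ∀ j, 1 ≤ j → j < r → mseq (j + 1) ∣ mseq j)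
    (𝒴 : Finset (Fin m → ℝ)) (h𝒴 : 𝒴.Nonempty) (c : ℕ → ℝ) (w : Fin m → ℝ) :
    (∑ Y ∈ Fintype.piFinset (fun _ : Fin (mseq 1) => 𝒴),
        Real.exp
          ((∑ j ∈ Finset.Icc 2 r,
              c j ^ 2 / 2 *
                ∑ i ∈ Finset.range (mseq 1 / mseq j),
                  ∑ a : Fin m,
                    (∑ jj ∈ Finset.univ.filter
                        (fun jj : Fin (mseq 1) => (jj : ℕ) / mseq j = i), Y jj a) ^ 2) +
            ∑ a : Fin m, (∑ jj : Fin (mseq 1), Y jj a) * w a)) =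
      (nestedHS m 𝒴 w (fun d => c (r + 1 - d))
          (fun d => if d = 1 then mseq r else mseq (r + 1 - d) / mseq (r + 2 - d))
          (r - 1) (fun _ => 0)) ^ (mseq 1 / mseq 2) := by
  have hdvd : ∀ j j', 1 ≤ j → j ≤ j' → j' ≤ r → mseq j' ∣ mseq j := by
    intro j j' h1 h2 h3
    induction j', h2 using Nat.le_induction with
    | base => exact dvd_rfl
    | succ j' hj ih => exact dvd_trans (hchain j' (by omega) (by omega)) (ih (by omega))
  have h21 : mseq 2 ∣ mseq 1 := hdvd 1 2 (by omega) (by omega) hr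
  set E : ℕ → ℕ := fun d => if d = 1 then mseq r else mseq (r + 1 - d) / mseq (r + 2 - d)
    with hE
  have hepos : ∀ k, 1 ≤ k → k ≤ r - 1 → 0 < E k := by
    intro k h1 h2
    rw [hE]
    by_cases hk : k = 1
    · simp only [hk, if_pos rfl]
      exact hmpos r (by omega) le_rfl
    · simp only [if_neg hk]
      have hd : mseq (r + 2 - k) ∣ mseq (r + 1 - k) := by
        have := hchain (r + 1 - k) (by omega) (by omega)
        rwa [show r + 1 - k + 1 = r + 2 - k by omega] at this
      exact Nat.div_pos (Nat.le_of_dvd (hmpos (r + 1 - k) (by omega) (by omega)) hd)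
        (hmpos (r + 2 - k) (by omega) (by omega))
  have hNn : ∀ d, 1 ≤ d → d ≤ r - 1 → Nn E d = mseq (r + 1 - d) := by
    intro d
    induction d with
    | zero => omega
    | succ d ih =>
      intro _ h2
      by_cases hd : d = 0
      · subst hd
        show E 1 * Nn E 0 = mseq (r + 1 - 1)
        rw [hE]
        simp only [if_pos rfl, if_true]
        rw [show Nn E 0 = 1 from rfl, mul_one, show r + 1 - 1 = r by omega]
      · have h1d : 1 ≤ d := by omega
        rw [Nn, ih h1d (by omega)]
        have he1 : E (d + 1) = mseq (r - d) / mseq (r + 1 - d) := by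
          rw [hE]
          simp only [if_neg (by omega : ¬ d + 1 = 1)]
          rw [show r + 1 - (d + 1) = r - d by omega, show r + 2 - (d + 1) = r + 1 - d by omega]
        rw [he1, show r + 1 - (d + 1) = r - d by omega]
        have hdd : mseq (r + 1 - d) ∣ mseq (r - d) := by
          have := hchain (r - d) (by omega) (by omega)
          rwa [show r - d + 1 = r + 1 - d by omega] at this
        exact Nat.div_mul_cancel hdd
  rw [key m 𝒴 w (fun d => c (r + 1 - d)) E (r - 1) hepos (fun _ => 0)]
  rw [show Nn E (r - 1) = mseq 2 from by
    rw [hNn (r - 1) (by omega) le_rfl, show r + 1 - (r - 1) = 2 by omega]]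
  set n := mseq 1 / mseq 2 with hn
  rw [show mseq 1 = n * mseq 2 from (Nat.div_mul_cancel h21).symm]
  rw [pow_regroup 𝒴 n (mseq 2)]
  refine Finset.sum_congr rfl fun Z hZ => ?_
  rw [← Real.exp_sum]
  congr 1
  have hN2 : 0 < mseq 2 := hmpos 2 (by omega) hr
  have hB : ∀ k ∈ Finset.Icc 1 (r - 1), 0 < Nn E k ∧ Nn E k ∣ mseq 2 := by
    intro k hk
    obtain ⟨hk1, hk2⟩ := Finset.mem_Icc.mp hk
    refine ⟨Nn_pos (fun k' h1' h2' => hepos k' h1' (by omega)), ?_⟩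
    have := Nn_dvd (e := E) hk2
    rwa [hNn (r - 1) (by omega) le_rfl, show r + 1 - (r - 1) = 2 by omega] at this
  have hsplit := exponent_split (m := m) n (mseq 2) hN2 (Finset.Icc 1 (r - 1)) (Nn E)
    (fun k => c (r + 1 - k) ^ 2 / 2) hB Z (fun a => 0 + w a)
  refine Eq.trans ?_ hsplit
  congr 1
  · refine Finset.sum_nbij' (fun j => r + 1 - j) (fun k => r + 1 - k) ?_ ?_ ?_ ?_ ?_
    · intro j hj; simp only [Finset.mem_Icc] at *; omega
    · intro k hk; simp only [Finset.mem_Icc] at *; omega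
    · intro j hj; simp only [Finset.mem_Icc] at hj
      show r + 1 - (r + 1 - j) = j; omega
    · intro k hk; simp only [Finset.mem_Icc] at hk
      show r + 1 - (r + 1 - k) = k; omega
    · intro j hj
      simp only [Finset.mem_Icc] at hj
      have e1 : r + 1 - (r + 1 - j) = j := by omega
      have e2 : Nn E (r + 1 - j) = mseq j := by
        rw [hNn (r + 1 - j) (by omega) (by omega), e1]
      simp only [e1, e2]
      congr 1
      rw [Nat.mul_div_assoc n (hdvd 2 j (by omega) hj.1 hj.2)]
      refine Finset.sum_congr rfl fun p _ => Finset.sum_congr rfl fun a _ => ?_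
      rw [bsum]
  · exact Finset.sum_congr rfl fun a _ => by rw [zero_add]
end
end
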